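/- arXiv:2307.12754 — 4 statements merged into one kernel-verified Lean document; each statement's English description precedes it below -/
import Mathlib

section
/- For every nonnegative integer n and every real x, the normalised Hermite polynomial satisfies the bound |h_n(x)| ≤ exp(x²/4). -/
open MeasureTheory Real Filter Finset


/-- Probabilist Hermite polynomials. -/
noncomputable def He : ℕ → ℝ → ℝ
  | 0, _ => 1
  | 1, x => x
  | n + 2, x => x * He (n + 1) x - (n + 1) * He n x

/-- Normalised Hermite polynomials `h n = He n / √(n!)`. -/
noncomputable def hpoly (n : ℕ) (x : ℝ) : ℝ := He n x / Real.sqrt (Nat.factorial n)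

namespace CramerProof

/-- Integral over ℝ of a derivative vanishes when the function decays at ±∞. -/
lemma integral_deriv_eq_zero {E : Type*} [NormedAddCommGroup E] [NormedSpace ℝ E]
    [CompleteSpace E] {g g' : ℝ → E} (hd : ∀ x : ℝ, HasDerivAt g (g' x) x)
    (hi : Integrable g') (hbot : Tendsto g atBot (nhds 0))
    (htop : Tendsto g atTop (nhds 0)) : ∫ x : ℝ, g' x = 0 := by
  have h1 : Tendsto (fun R : ℝ => ∫ x : ℝ in (-R)..R, g' x) atTop (nhds (∫ x : ℝ, g' x)) :=
    intervalIntegral_tendsto_integral hi tendsto_neg_atTop_atBot tendsto_id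
  have h2 : (fun R : ℝ => ∫ x : ℝ in (-R)..R, g' x) = fun R => g R - g (-R) := by
    funext R
    exact intervalIntegral.integral_eq_sub_of_hasDerivAt (fun x _ => hd x)
      hi.intervalIntegrable
  rw [h2] at h1
  have h3 : Tendsto (fun R : ℝ => g R - g (-R)) atTop (nhds (0 - 0)) :=
    htop.sub (hbot.comp tendsto_neg_atTop_atBot)
  rw [sub_zero] at h3
  exact tendsto_nhds_unique h1 h3

lemma pow_le_fact_mul_exp {v : ℝ} (hv : 0 ≤ v) (k : ℕ) :
    v ^ k ≤ (k.factorial : ℝ) * rexp v := by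
  have h1 : v ^ k / (k.factorial : ℝ) ≤ rexp v := by
    refine le_trans ?_ (Real.sum_le_exp_of_nonneg hv (k + 1))
    exact Finset.single_le_sum (f := fun i => v ^ i / (i.factorial : ℝ))
      (fun i _ => by positivity) (self_mem_range_succ k)
  have hk : (0:ℝ) < (k.factorial : ℝ) := by positivity
  calc v ^ k = (v ^ k / (k.factorial : ℝ)) * (k.factorial : ℝ) := by field_simp
    _ ≤ rexp v * (k.factorial : ℝ) := by
        exact mul_le_mul_of_nonneg_right h1 hk.le
    _ = (k.factorial : ℝ) * rexp v := by ring

lemma abs_pow_gauss_bound (k : ℕ) (ξ : ℝ) :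
    |ξ| ^ k * rexp (-ξ ^ 2 / 2) ≤
      (1 + 4 ^ k * (k.factorial : ℝ)) * rexp (-(1/4) * ξ ^ 2) := by
  have h1 : |ξ| ^ k ≤ 1 + (ξ ^ 2) ^ k := by
    rcases le_total (|ξ|) 1 with h | h
    · have : |ξ| ^ k ≤ 1 := pow_le_one₀ (abs_nonneg ξ) h
      have h2 : (0:ℝ) ≤ (ξ ^ 2) ^ k := by positivity
      linarith
    · have : |ξ| ^ k ≤ (ξ ^ 2) ^ k := by
        apply pow_le_pow_left₀ (abs_nonneg ξ)
        nlinarith [sq_abs ξ, abs_nonneg ξ]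
      linarith
  have h2 : (ξ ^ 2) ^ k ≤ 4 ^ k * (k.factorial : ℝ) * rexp (ξ ^ 2 / 4) := by
    have := pow_le_fact_mul_exp (v := ξ ^ 2 / 4) (by positivity) k
    calc (ξ ^ 2) ^ k = 4 ^ k * (ξ ^ 2 / 4) ^ k := by
          rw [← mul_pow]; ring_nf
      _ ≤ 4 ^ k * ((k.factorial : ℝ) * rexp (ξ ^ 2 / 4)) := by
          apply mul_le_mul_of_nonneg_left this (by positivity)
      _ = 4 ^ k * (k.factorial : ℝ) * rexp (ξ ^ 2 / 4) := by ring
  have e1 : rexp (ξ ^ 2 / 4) * rexp (-ξ ^ 2 / 2) = rexp (-(1/4) * ξ ^ 2) := by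
    rw [← Real.exp_add]; ring_nf
  have e2 : rexp (-ξ ^ 2 / 2) ≤ rexp (-(1/4) * ξ ^ 2) := by
    apply Real.exp_le_exp.mpr; nlinarith [sq_nonneg ξ]
  have hexp : (0:ℝ) < rexp (-ξ ^ 2 / 2) := Real.exp_pos _
  calc |ξ| ^ k * rexp (-ξ ^ 2 / 2) ≤ (1 + (ξ ^ 2) ^ k) * rexp (-ξ ^ 2 / 2) := by
        apply mul_le_mul_of_nonneg_right h1 hexp.le
    _ = rexp (-ξ ^ 2 / 2) + (ξ ^ 2) ^ k * rexp (-ξ ^ 2 / 2) := by ring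
    _ ≤ rexp (-(1/4) * ξ ^ 2) +
        (4 ^ k * (k.factorial : ℝ) * rexp (ξ ^ 2 / 4)) * rexp (-ξ ^ 2 / 2) := by
        apply add_le_add e2
        exact mul_le_mul_of_nonneg_right h2 hexp.le
    _ = (1 + 4 ^ k * (k.factorial : ℝ)) * rexp (-(1/4) * ξ ^ 2) := by
        rw [mul_assoc, e1]; ring

lemma integrable_abs_pow_gauss (k : ℕ) :
    Integrable (fun ξ : ℝ => |ξ| ^ k * rexp (-ξ ^ 2 / 2)) := by
  have hg : Integrable (fun ξ : ℝ =>
      (1 + 4 ^ k * (k.factorial : ℝ)) * rexp (-(1/4) * ξ ^ 2)) :=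
    (integrable_exp_neg_mul_sq (by norm_num : (0:ℝ) < 1/4)).const_mul _
  refine hg.mono' ?_ ?_
  · exact (((continuous_abs.pow k).mul
      (Real.continuous_exp.comp (by fun_prop))).aestronglyMeasurable)
  · filter_upwards with ξ
    rw [Real.norm_eq_abs, abs_of_nonneg (by positivity)]
    exact abs_pow_gauss_bound k ξ

lemma integrable_pow_gauss (k : ℕ) :
    Integrable (fun ξ : ℝ => ξ ^ k * rexp (-ξ ^ 2 / 2)) := by
  refine (integrable_abs_pow_gauss k).mono' ?_ ?_
  · exact (((continuous_pow k).mul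
      (Real.continuous_exp.comp (by fun_prop))).aestronglyMeasurable)
  · filter_upwards with ξ
    rw [Real.norm_eq_abs, abs_mul, abs_pow, abs_of_pos (Real.exp_pos _)]

lemma tendsto_abs_pow_gauss_atTop (k : ℕ) :
    Tendsto (fun ξ : ℝ => |ξ| ^ k * rexp (-ξ ^ 2 / 2)) atTop (nhds 0) := by
  have h1 : Tendsto (fun ξ : ℝ => ξ * rexp (-ξ)) atTop (nhds 0) := by
    simpa using tendsto_pow_mul_exp_neg_atTop_nhds_zero 1
  have key : Tendsto (fun ξ : ℝ => (ξ * rexp (-ξ)) ^ k * rexp (-ξ)) atTop (nhds 0) := by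
    have := (h1.pow k).mul (Real.tendsto_exp_neg_atTop_nhds_zero)
    simpa using this
  apply squeeze_zero_norm' ?_ key
  filter_upwards [eventually_ge_atTop (max 1 (2 * (k + 1) : ℝ))] with ξ hξ
  have hξ1 : (1:ℝ) ≤ ξ := le_trans (le_max_left _ _) hξ
  have hξ2 : (2 * (k+1) : ℝ) ≤ ξ := le_trans (le_max_right _ _) hξ
  have hξ0 : (0:ℝ) ≤ ξ := by linarith
  rw [Real.norm_eq_abs, abs_of_nonneg (by positivity), abs_of_nonneg hξ0]
  have hdecay : rexp (-ξ ^ 2 / 2) ≤ rexp (-ξ) ^ (k+1) := by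
    rw [← Real.exp_nat_mul]
    apply Real.exp_le_exp.mpr
    push_cast
    nlinarith [mul_le_mul_of_nonneg_right hξ2 hξ0]
  calc ξ ^ k * rexp (-ξ ^ 2 / 2) ≤ ξ ^ k * rexp (-ξ) ^ (k+1) := by
        apply mul_le_mul_of_nonneg_left hdecay (by positivity)
    _ = (ξ * rexp (-ξ)) ^ k * rexp (-ξ) := by rw [mul_pow, pow_succ]; ring

lemma tendsto_abs_pow_gauss_atBot (k : ℕ) :
    Tendsto (fun ξ : ℝ => |ξ| ^ k * rexp (-ξ ^ 2 / 2)) atBot (nhds 0) := by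
  have h := (tendsto_abs_pow_gauss_atTop k).comp tendsto_neg_atBot_atTop
  apply h.congr
  intro ξ
  simp [abs_neg, neg_sq]

/-- the double factorial sequence `Dn i = (2i-1)!!`. -/
def Dn : ℕ → ℕ
  | 0 => 1
  | (i+1) => (2*i+1) * Dn i

lemma Dn_pos (i : ℕ) : 0 < Dn i := by
  induction i with
  | zero => simp [Dn]
  | succ i ih => simp only [Dn]; positivity

lemma integral_gauss_base : ∫ ξ : ℝ, rexp (-ξ ^ 2 / 2) = Real.sqrt (2 * π) := by
  have h : (fun ξ : ℝ => rexp (-ξ ^ 2 / 2)) = fun ξ : ℝ => rexp (-(1/2) * ξ ^ 2) := by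
    funext ξ; ring_nf
  rw [h, integral_gaussian]
  congr 1
  rw [div_div_eq_mul_div, div_one]
  ring

lemma gauss_moment (i : ℕ) :
    ∫ ξ : ℝ, ξ ^ (2*i) * rexp (-ξ ^ 2 / 2) = (Dn i : ℝ) * Real.sqrt (2 * π) := by
  induction i with
  | zero => simpa [Dn] using integral_gauss_base
  | succ i ih =>
    -- integration by parts with g = ξ^(2i+1) exp(-ξ²/2)
    set g : ℝ → ℝ := fun ξ => ξ ^ (2*i+1) * rexp (-ξ ^ 2 / 2) with hg
    set g' : ℝ → ℝ := fun ξ =>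
      (2*i+1 : ℝ) * (ξ ^ (2*i) * rexp (-ξ ^ 2 / 2)) - ξ ^ (2*i+2) * rexp (-ξ ^ 2 / 2) with hg'
    have hd : ∀ ξ : ℝ, HasDerivAt g (g' ξ) ξ := by
      intro ξ
      have hexp : HasDerivAt (fun ξ : ℝ => rexp (-ξ ^ 2 / 2)) (rexp (-ξ ^ 2 / 2) * (-ξ)) ξ := by
        have hinner : HasDerivAt (fun ξ : ℝ => -ξ ^ 2 / 2) (-ξ) ξ := by
          have := ((hasDerivAt_pow 2 ξ).fun_neg).div_const 2
          refine this.congr_deriv ?_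
          ring
        exact hinner.exp
      have := (hasDerivAt_pow (2*i+1) ξ).fun_mul hexp
      refine this.congr_deriv ?_
      simp only [hg', Nat.add_sub_cancel]
      push_cast
      ring
    have hi' : Integrable g' := by
      apply Integrable.sub
      · exact (integrable_pow_gauss (2*i)).const_mul _
      · exact integrable_pow_gauss (2*i+2)
    have hnorm : ∀ ξ : ℝ, ‖g ξ‖ ≤ |ξ| ^ (2*i+1) * rexp (-ξ ^ 2 / 2) := by
      intro ξ
      rw [Real.norm_eq_abs, hg]
      rw [abs_mul, abs_pow, abs_of_pos (Real.exp_pos _)]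
    have hbot : Tendsto g atBot (nhds 0) :=
      squeeze_zero_norm hnorm (tendsto_abs_pow_gauss_atBot (2*i+1))
    have htop : Tendsto g atTop (nhds 0) :=
      squeeze_zero_norm hnorm (tendsto_abs_pow_gauss_atTop (2*i+1))
    have h0 := integral_deriv_eq_zero hd hi' hbot htop
    rw [hg', integral_sub ((integrable_pow_gauss (2*i)).const_mul _)
      (integrable_pow_gauss (2*i+2)), integral_const_mul, sub_eq_zero] at h0
    have h2 : 2*(i+1) = 2*i+2 := by ring
    rw [h2, ← h0, ih]
    simp only [Dn]
    push_cast
    ring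

lemma Dn_zero : Dn 0 = 1 := rfl

lemma Dn_succ_real (i : ℕ) : (Dn (i+1) : ℝ) = (2*(i:ℝ)+1) * (Dn i : ℝ) := by
  simp only [Dn]; push_cast; ring

/-- The key combinatorial identity `∑ C(k,i)·(2i-1)!!·(2(k-i)-1)!! = 2^k k!`. -/
lemma Sid (k : ℕ) :
    ∑ i ∈ range (k+1), (k.choose i : ℝ) * (Dn i : ℝ) * (Dn (k-i) : ℝ)
      = 2 ^ k * (k.factorial : ℝ) := by
  induction k with
  | zero => simp [Dn]
  | succ k ih =>
    have step1 : ∑ i ∈ range (k+2), ((k+1).choose i : ℝ) * (Dn i : ℝ) * (Dn (k+1-i) : ℝ)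
        = (∑ i ∈ range (k+1),
            ((k.choose i : ℝ) + (k.choose (i+1) : ℝ)) * (Dn (i+1) : ℝ) * (Dn (k-i) : ℝ))
          + (Dn (k+1) : ℝ) := by
      rw [Finset.sum_range_succ'
        (fun i => ((k+1).choose i : ℝ) * (Dn i : ℝ) * (Dn (k+1-i) : ℝ)) (k+1)]
      congr 1
      · apply Finset.sum_congr rfl
        intro i _
        have h1 : k + 1 - (i+1) = k - i := by omega
        rw [h1, Nat.choose_succ_succ]
        push_cast
        ring
      · simp [Dn_zero]
    have step2 : ∑ i ∈ range (k+1),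
          ((k.choose i : ℝ) + (k.choose (i+1) : ℝ)) * (Dn (i+1) : ℝ) * (Dn (k-i) : ℝ)
        = (∑ i ∈ range (k+1), (k.choose i : ℝ) * (Dn (i+1) : ℝ) * (Dn (k-i) : ℝ))
          + ∑ i ∈ range (k+1), (k.choose (i+1) : ℝ) * (Dn (i+1) : ℝ) * (Dn (k-i) : ℝ) := by
      rw [← Finset.sum_add_distrib]
      apply Finset.sum_congr rfl
      intro i _; ring
    have step3 : (∑ i ∈ range (k+1), (k.choose (i+1) : ℝ) * (Dn (i+1) : ℝ) * (Dn (k-i) : ℝ))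
          + (Dn (k+1) : ℝ)
        = ∑ j ∈ range (k+1), (k.choose j : ℝ) * (Dn j : ℝ) * (Dn (k+1-j) : ℝ) := by
      have e1 := Finset.sum_range_succ'
        (fun j => (k.choose j : ℝ) * (Dn j : ℝ) * (Dn (k+1-j) : ℝ)) (k+1)
      have e2 := Finset.sum_range_succ
        (fun j => (k.choose j : ℝ) * (Dn j : ℝ) * (Dn (k+1-j) : ℝ)) (k+1)
      have e3 : (k.choose (k+1) : ℝ) * (Dn (k+1) : ℝ) * (Dn (k+1-(k+1)) : ℝ) = 0 := by
        rw [Nat.choose_eq_zero_of_lt (by omega)]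
        simp
      have e4 : ∀ i ∈ range (k+1),
          (k.choose (i+1) : ℝ) * (Dn (i+1) : ℝ) * (Dn (k+1-(i+1)) : ℝ)
          = (k.choose (i+1) : ℝ) * (Dn (i+1) : ℝ) * (Dn (k-i) : ℝ) := by
        intro i _
        have : k + 1 - (i+1) = k - i := by omega
        rw [this]
      rw [e3, add_zero] at e2
      rw [Finset.sum_congr rfl e4] at e1
      have e5 : (k.choose 0 : ℝ) * (Dn 0 : ℝ) * (Dn (k+1-0) : ℝ)
          = (Dn (k+1) : ℝ) := by simp [Dn_zero]
      rw [e5] at e1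
      rw [← e2, e1]
    have step4 : ∑ j ∈ range (k+1), (k.choose j : ℝ) * (Dn j : ℝ) * (Dn (k+1-j) : ℝ)
        = ∑ j ∈ range (k+1),
            (k.choose j : ℝ) * (Dn j : ℝ) * ((2*((k:ℝ)-(j:ℝ))+1) * (Dn (k-j) : ℝ)) := by
      apply Finset.sum_congr rfl
      intro j hj
      have hjk : j ≤ k := by simpa using Nat.lt_succ_iff.mp (mem_range.mp hj)
      have h1 : k + 1 - j = (k - j) + 1 := by omega
      rw [h1, Dn_succ_real]
      rw [Nat.cast_sub hjk]
    have step5 : ∑ i ∈ range (k+1), (k.choose i : ℝ) * (Dn (i+1) : ℝ) * (Dn (k-i) : ℝ)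
        = ∑ i ∈ range (k+1),
            (k.choose i : ℝ) * ((2*(i:ℝ)+1) * (Dn i : ℝ)) * (Dn (k-i) : ℝ) := by
      apply Finset.sum_congr rfl
      intro i _
      rw [Dn_succ_real]
    calc ∑ i ∈ range (k+1+1), ((k+1).choose i : ℝ) * (Dn i : ℝ) * (Dn (k+1-i) : ℝ)
        = (∑ i ∈ range (k+1), (k.choose i : ℝ) * (Dn (i+1) : ℝ) * (Dn (k-i) : ℝ))
          + ((∑ i ∈ range (k+1), (k.choose (i+1) : ℝ) * (Dn (i+1) : ℝ) * (Dn (k-i) : ℝ))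
             + (Dn (k+1) : ℝ)) := by
          rw [step1, step2]; ring
      _ = (∑ i ∈ range (k+1),
            (k.choose i : ℝ) * ((2*(i:ℝ)+1) * (Dn i : ℝ)) * (Dn (k-i) : ℝ))
          + ∑ j ∈ range (k+1),
            (k.choose j : ℝ) * (Dn j : ℝ) * ((2*((k:ℝ)-(j:ℝ))+1) * (Dn (k-j) : ℝ)) := by
          rw [← step5, step3, step4]
      _ = ∑ i ∈ range (k+1),
            (2*(k:ℝ)+2) * ((k.choose i : ℝ) * (Dn i : ℝ) * (Dn (k-i) : ℝ)) := by
          rw [← Finset.sum_add_distrib]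
          apply Finset.sum_congr rfl
          intro i _; ring
      _ = (2*(k:ℝ)+2) * (2 ^ k * (k.factorial : ℝ)) := by
          rw [← Finset.mul_sum, ih]
      _ = 2 ^ (k+1) * ((k+1).factorial : ℝ) := by
          rw [Nat.factorial_succ]
          push_cast
          ring


/-- atoms of 2D Gaussian integrals -/
noncomputable def atom (i j : ℕ) : ℝ × ℝ → ℝ := fun p =>
  (p.1 ^ (2*i) * rexp (-p.1 ^ 2 / 2)) * (p.2 ^ (2*j) * rexp (-p.2 ^ 2 / 2))

lemma atom_int (i j : ℕ) : Integrable (atom i j) ((volume : Measure ℝ).prod volume) :=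
  (integrable_pow_gauss (2*i)).mul_prod (integrable_pow_gauss (2*j))

lemma atom_val (i j : ℕ) :
    ∫ p, atom i j p ∂((volume : Measure ℝ).prod volume) = (Dn i : ℝ) * (Dn j : ℝ) * (2*π) := by
  simp only [atom]
  rw [integral_prod_mul (f := fun ξ : ℝ => ξ ^ (2*i) * rexp (-ξ ^ 2 / 2))
      (g := fun ξ : ℝ => ξ ^ (2*j) * rexp (-ξ ^ 2 / 2)), gauss_moment, gauss_moment]
  have hs : Real.sqrt (2*π) * Real.sqrt (2*π) = 2*π := Real.mul_self_sqrt (by positivity)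
  calc (Dn i : ℝ) * Real.sqrt (2*π) * ((Dn j : ℝ) * Real.sqrt (2*π))
      = (Dn i : ℝ) * (Dn j : ℝ) * (Real.sqrt (2*π) * Real.sqrt (2*π)) := by ring
    _ = (Dn i : ℝ) * (Dn j : ℝ) * (2*π) := by rw [hs]

/-- pointwise expansion of the k-th power of the "radial" variable -/
lemma Mexp (k : ℕ) (p : ℝ × ℝ) :
    ((p.1 ^ 2 + p.2 ^ 2)/2) ^ k * (rexp (-p.1 ^ 2 / 2) * rexp (-p.2 ^ 2 / 2)) =
    ∑ i ∈ range (k+1), ((k.choose i : ℝ) / 2 ^ k) * atom i (k-i) p := by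
  rw [div_pow, add_pow, Finset.sum_div, Finset.sum_mul]
  apply Finset.sum_congr rfl
  intro i _
  simp only [atom]
  rw [pow_mul, pow_mul]
  ring

lemma Mk_int (k : ℕ) :
    Integrable (fun p : ℝ × ℝ => ((p.1 ^ 2 + p.2 ^ 2)/2) ^ k *
      (rexp (-p.1 ^ 2 / 2) * rexp (-p.2 ^ 2 / 2))) ((volume : Measure ℝ).prod volume) := by
  rw [show (fun p : ℝ × ℝ => ((p.1 ^ 2 + p.2 ^ 2)/2) ^ k *
      (rexp (-p.1 ^ 2 / 2) * rexp (-p.2 ^ 2 / 2)))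
    = fun p => ∑ i ∈ range (k+1), ((k.choose i : ℝ) / 2 ^ k) * atom i (k-i) p
    from funext (Mexp k)]
  exact integrable_finset_sum _ (fun i _ => (atom_int i (k-i)).const_mul _)

lemma Mk_val (k : ℕ) :
    ∫ p, ((p.1 ^ 2 + p.2 ^ 2)/2) ^ k * (rexp (-p.1 ^ 2 / 2) * rexp (-p.2 ^ 2 / 2))
      ∂((volume : Measure ℝ).prod volume) = (k.factorial : ℝ) * (2*π) := by
  rw [show (fun p : ℝ × ℝ => ((p.1 ^ 2 + p.2 ^ 2)/2) ^ k *
      (rexp (-p.1 ^ 2 / 2) * rexp (-p.2 ^ 2 / 2)))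
    = fun p => ∑ i ∈ range (k+1), ((k.choose i : ℝ) / 2 ^ k) * atom i (k-i) p
    from funext (Mexp k)]
  rw [integral_finset_sum _ (fun i _ => (atom_int i (k-i)).const_mul _)]
  have hterm : ∀ i ∈ range (k+1),
      ∫ p, ((k.choose i : ℝ) / 2 ^ k) * atom i (k-i) p ∂((volume : Measure ℝ).prod volume)
      = ((k.choose i : ℝ) * (Dn i : ℝ) * (Dn (k-i) : ℝ)) * ((2*π) / 2 ^ k) := by
    intro i _
    rw [integral_const_mul, atom_val]
    ring
  rw [Finset.sum_congr rfl hterm, ← Finset.sum_mul, Sid]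
  have h2 : (0:ℝ) < 2 ^ k := by positivity
  field_simp

lemma sqMk_int (k : ℕ) :
    Integrable (fun p : ℝ × ℝ => p.1 ^ 2 * (((p.1 ^ 2 + p.2 ^ 2)/2) ^ k *
      (rexp (-p.1 ^ 2 / 2) * rexp (-p.2 ^ 2 / 2)))) ((volume : Measure ℝ).prod volume) := by
  have h : (fun p : ℝ × ℝ => p.1 ^ 2 * (((p.1 ^ 2 + p.2 ^ 2)/2) ^ k *
      (rexp (-p.1 ^ 2 / 2) * rexp (-p.2 ^ 2 / 2))))
      = fun p => ∑ i ∈ range (k+1), ((k.choose i : ℝ) / 2 ^ k) * atom (i+1) (k-i) p := by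
    funext p
    rw [Mexp, Finset.mul_sum]
    apply Finset.sum_congr rfl
    intro i _
    simp only [atom]
    have e1 : 2*(i+1) = 2*i + 2 := by ring
    rw [e1, pow_add]
    ring
  rw [h]
  exact integrable_finset_sum _ (fun i _ => (atom_int (i+1) (k-i)).const_mul _)

lemma sqMk_int' (k : ℕ) :
    Integrable (fun p : ℝ × ℝ => p.2 ^ 2 * (((p.1 ^ 2 + p.2 ^ 2)/2) ^ k *
      (rexp (-p.1 ^ 2 / 2) * rexp (-p.2 ^ 2 / 2)))) ((volume : Measure ℝ).prod volume) := by
  have h := (sqMk_int k).swap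
  apply h.congr
  filter_upwards with p
  simp only [Function.comp, Prod.fst_swap, Prod.snd_swap]
  rw [add_comm (p.2 ^ 2) (p.1 ^ 2)]
  ring

/-- expansion of `(M + t)^N · gauss` in powers of `M`. -/
lemma EMtexp (t : ℝ) (N : ℕ) (p : ℝ × ℝ) :
    ((p.1 ^ 2 + p.2 ^ 2)/2 + t) ^ N * (rexp (-p.1 ^ 2 / 2) * rexp (-p.2 ^ 2 / 2)) =
    ∑ k ∈ range (N+1), ((N.choose k : ℝ) * t ^ (N-k)) *
      (((p.1 ^ 2 + p.2 ^ 2)/2) ^ k * (rexp (-p.1 ^ 2 / 2) * rexp (-p.2 ^ 2 / 2))) := by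
  rw [add_pow, Finset.sum_mul]
  apply Finset.sum_congr rfl
  intro k _
  ring

lemma EMt_int (t : ℝ) (N : ℕ) :
    Integrable (fun p : ℝ × ℝ => ((p.1 ^ 2 + p.2 ^ 2)/2 + t) ^ N *
      (rexp (-p.1 ^ 2 / 2) * rexp (-p.2 ^ 2 / 2))) ((volume : Measure ℝ).prod volume) := by
  rw [show (fun p : ℝ × ℝ => ((p.1 ^ 2 + p.2 ^ 2)/2 + t) ^ N *
      (rexp (-p.1 ^ 2 / 2) * rexp (-p.2 ^ 2 / 2)))
    = fun p => ∑ k ∈ range (N+1), ((N.choose k : ℝ) * t ^ (N-k)) *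
      (((p.1 ^ 2 + p.2 ^ 2)/2) ^ k * (rexp (-p.1 ^ 2 / 2) * rexp (-p.2 ^ 2 / 2)))
    from funext (EMtexp t N)]
  exact integrable_finset_sum _ (fun k _ => (Mk_int k).const_mul _)

lemma EMt_le (t : ℝ) (ht : 0 ≤ t) (N : ℕ) :
    ∫ p, ((p.1 ^ 2 + p.2 ^ 2)/2 + t) ^ N * (rexp (-p.1 ^ 2 / 2) * rexp (-p.2 ^ 2 / 2))
      ∂((volume : Measure ℝ).prod volume) ≤ 2 * π * (N.factorial : ℝ) * rexp t := by
  rw [show (fun p : ℝ × ℝ => ((p.1 ^ 2 + p.2 ^ 2)/2 + t) ^ N *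
      (rexp (-p.1 ^ 2 / 2) * rexp (-p.2 ^ 2 / 2)))
    = fun p => ∑ k ∈ range (N+1), ((N.choose k : ℝ) * t ^ (N-k)) *
      (((p.1 ^ 2 + p.2 ^ 2)/2) ^ k * (rexp (-p.1 ^ 2 / 2) * rexp (-p.2 ^ 2 / 2)))
    from funext (EMtexp t N)]
  rw [integral_finset_sum _ (fun k _ => (Mk_int k).const_mul _)]
  have hterm : ∀ k ∈ range (N+1),
      ∫ p, ((N.choose k : ℝ) * t ^ (N-k)) *
        (((p.1 ^ 2 + p.2 ^ 2)/2) ^ k * (rexp (-p.1 ^ 2 / 2) * rexp (-p.2 ^ 2 / 2)))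
        ∂((volume : Measure ℝ).prod volume)
      = 2 * π * ((N.factorial : ℝ) * (t ^ (N-k) / ((N-k).factorial : ℝ))) := by
    intro k hk
    have hkN : k ≤ N := by simpa using Nat.lt_succ_iff.mp (mem_range.mp hk)
    rw [integral_const_mul, Mk_val]
    have hcf : (N.choose k : ℝ) * (k.factorial : ℝ) * ((N-k).factorial : ℝ)
        = (N.factorial : ℝ) := by
      rw [← Nat.cast_mul, ← Nat.cast_mul, Nat.choose_mul_factorial_mul_factorial hkN]
    have hfk : (0:ℝ) < ((N-k).factorial : ℝ) := by positivity
    rw [← hcf]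
    field_simp
  rw [Finset.sum_congr rfl hterm, ← Finset.mul_sum]
  have hsum : ∑ k ∈ range (N+1), (N.factorial : ℝ) * (t ^ (N-k) / ((N-k).factorial : ℝ))
      = (N.factorial : ℝ) * ∑ j ∈ range (N+1), t ^ j / (j.factorial : ℝ) := by
    rw [← Finset.mul_sum]
    congr 1
    have := Finset.sum_range_reflect (fun j => t ^ j / (j.factorial : ℝ)) (N+1)
    rw [← this]
    apply Finset.sum_congr rfl
    intro k hk
    have hkN : k ≤ N := by simpa using Nat.lt_succ_iff.mp (mem_range.mp hk)
    congr 2 <;> omega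
  rw [hsum]
  have hexp : ∑ j ∈ range (N+1), t ^ j / (j.factorial : ℝ) ≤ rexp t :=
    Real.sum_le_exp_of_nonneg ht (N+1)
  have hfac : (0:ℝ) ≤ (N.factorial : ℝ) := by positivity
  calc 2 * π * ((N.factorial : ℝ) * ∑ j ∈ range (N+1), t ^ j / (j.factorial : ℝ))
      ≤ 2 * π * ((N.factorial : ℝ) * rexp t) := by
        apply mul_le_mul_of_nonneg_left ?_ (by positivity)
        exact mul_le_mul_of_nonneg_left hexp hfac
    _ = 2 * π * (N.factorial : ℝ) * rexp t := by ring

lemma sqEMt_int (t : ℝ) (N : ℕ) :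
    Integrable (fun p : ℝ × ℝ => p.1 ^ 2 * (((p.1 ^ 2 + p.2 ^ 2)/2 + t) ^ N *
      (rexp (-p.1 ^ 2 / 2) * rexp (-p.2 ^ 2 / 2)))) ((volume : Measure ℝ).prod volume) := by
  have h : (fun p : ℝ × ℝ => p.1 ^ 2 * (((p.1 ^ 2 + p.2 ^ 2)/2 + t) ^ N *
      (rexp (-p.1 ^ 2 / 2) * rexp (-p.2 ^ 2 / 2))))
      = fun p => ∑ k ∈ range (N+1), ((N.choose k : ℝ) * t ^ (N-k)) *
        (p.1 ^ 2 * (((p.1 ^ 2 + p.2 ^ 2)/2) ^ k *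
          (rexp (-p.1 ^ 2 / 2) * rexp (-p.2 ^ 2 / 2)))) := by
    funext p
    rw [EMtexp, Finset.mul_sum]
    apply Finset.sum_congr rfl
    intro k _
    ring
  rw [h]
  exact integrable_finset_sum _ (fun k _ => (sqMk_int k).const_mul _)

lemma sqEMt_int' (t : ℝ) (N : ℕ) :
    Integrable (fun p : ℝ × ℝ => p.2 ^ 2 * (((p.1 ^ 2 + p.2 ^ 2)/2 + t) ^ N *
      (rexp (-p.1 ^ 2 / 2) * rexp (-p.2 ^ 2 / 2)))) ((volume : Measure ℝ).prod volume) := by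
  have h : (fun p : ℝ × ℝ => p.2 ^ 2 * (((p.1 ^ 2 + p.2 ^ 2)/2 + t) ^ N *
      (rexp (-p.1 ^ 2 / 2) * rexp (-p.2 ^ 2 / 2))))
      = fun p => ∑ k ∈ range (N+1), ((N.choose k : ℝ) * t ^ (N-k)) *
        (p.2 ^ 2 * (((p.1 ^ 2 + p.2 ^ 2)/2) ^ k *
          (rexp (-p.1 ^ 2 / 2) * rexp (-p.2 ^ 2 / 2)))) := by
    funext p
    rw [EMtexp, Finset.mul_sum]
    apply Finset.sum_congr rfl
    intro k _
    ring
  rw [h]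
  exact integrable_finset_sum _ (fun k _ => (sqMk_int' k).const_mul _)

lemma antisym_zero (t : ℝ) (N : ℕ) :
    ∫ p, ((p.1 ^ 2 - p.2 ^ 2)/2) * (((p.1 ^ 2 + p.2 ^ 2)/2 + t) ^ N *
      (rexp (-p.1 ^ 2 / 2) * rexp (-p.2 ^ 2 / 2)))
      ∂((volume : Measure ℝ).prod volume) = 0 := by
  set h : ℝ × ℝ → ℝ := fun p => ((p.1 ^ 2 - p.2 ^ 2)/2) * (((p.1 ^ 2 + p.2 ^ 2)/2 + t) ^ N *
      (rexp (-p.1 ^ 2 / 2) * rexp (-p.2 ^ 2 / 2))) with hdef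
  have hswap : ∀ p : ℝ × ℝ, h p.swap = - h p := by
    intro p
    simp only [hdef, Prod.fst_swap, Prod.snd_swap]
    rw [add_comm (p.2 ^ 2) (p.1 ^ 2)]
    ring
  have key := integral_prod_swap (μ := (volume : Measure ℝ)) (ν := (volume : Measure ℝ)) h
  simp only [hswap] at key
  rw [integral_neg] at key
  linarith

lemma sq_add_pow_expand (t : ℝ) (a : ℕ) :
    (fun ξ : ℝ => (ξ ^ 2 + t) ^ a * rexp (-ξ ^ 2 / 2))
    = fun ξ => ∑ p ∈ range (a+1), ((a.choose p : ℝ) * t ^ (a-p)) *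
        (ξ ^ (2*p) * rexp (-ξ ^ 2 / 2)) := by
  funext ξ
  rw [add_pow, Finset.sum_mul]
  apply Finset.sum_congr rfl
  intro p _
  rw [pow_mul]
  ring

lemma integrable_sq_add_pow (t : ℝ) (a : ℕ) :
    Integrable (fun ξ : ℝ => (ξ ^ 2 + t) ^ a * rexp (-ξ ^ 2 / 2)) := by
  rw [sq_add_pow_expand]
  exact integrable_finset_sum _ (fun p _ => (integrable_pow_gauss (2*p)).const_mul _)

lemma sq_add_pow_integral_pos (t : ℝ) (ht : 0 ≤ t) (a : ℕ) :
    0 < ∫ ξ : ℝ, (ξ ^ 2 + t) ^ a * rexp (-ξ ^ 2 / 2) := by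
  rw [sq_add_pow_expand, integral_finset_sum _
    (fun p _ => (integrable_pow_gauss (2*p)).const_mul _)]
  have hterm : ∀ p ∈ range (a+1),
      ∫ ξ : ℝ, ((a.choose p : ℝ) * t ^ (a-p)) * (ξ ^ (2*p) * rexp (-ξ ^ 2 / 2))
      = ((a.choose p : ℝ) * t ^ (a-p)) * ((Dn p : ℝ) * Real.sqrt (2*π)) := by
    intro p _
    rw [integral_const_mul, gauss_moment]
  rw [Finset.sum_congr rfl hterm]
  have hpos : (0:ℝ) < ((a.choose a : ℝ) * t ^ (a-a)) * ((Dn a : ℝ) * Real.sqrt (2*π)) := by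
    rw [Nat.choose_self, Nat.sub_self, pow_zero]
    have := Dn_pos a
    have h2π : (0:ℝ) < Real.sqrt (2*π) := Real.sqrt_pos.mpr (by positivity)
    push_cast
    positivity
  have hle := Finset.single_le_sum
    (f := fun p => ((a.choose p : ℝ) * t ^ (a-p)) * ((Dn p : ℝ) * Real.sqrt (2*π)))
    (fun p _ => by positivity) (self_mem_range_succ a)
  linarith

/-- pointwise AM-GM: `(ξ²+t)(η²+t) ≤ ((ξ²+η²)/2+t)²`, raised to powers. -/
lemma amgm_pow (t : ℝ) (ht : 0 ≤ t) (b : ℕ) (ξ η : ℝ) :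
    ((ξ ^ 2 + t) * (η ^ 2 + t)) ^ b ≤ ((ξ ^ 2 + η ^ 2)/2 + t) ^ (2*b) := by
  have h1 : (ξ ^ 2 + t) * (η ^ 2 + t) ≤ ((ξ ^ 2 + η ^ 2)/2 + t) ^ 2 := by
    nlinarith [sq_nonneg (ξ ^ 2 - η ^ 2)]
  calc ((ξ ^ 2 + t) * (η ^ 2 + t)) ^ b ≤ (((ξ ^ 2 + η ^ 2)/2 + t) ^ 2) ^ b := by
        apply pow_le_pow_left₀ (by positivity) h1
    _ = ((ξ ^ 2 + η ^ 2)/2 + t) ^ (2*b) := by rw [← pow_mul]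

/-- Main 2D bound: product of two neighbouring even moments -/
lemma prod_le (t : ℝ) (ht : 0 ≤ t) (a b : ℕ) (h1 : b ≤ a) (h2 : a ≤ b + 1) :
    (∫ ξ : ℝ, (ξ ^ 2 + t) ^ a * rexp (-ξ ^ 2 / 2)) *
      (∫ ξ : ℝ, (ξ ^ 2 + t) ^ b * rexp (-ξ ^ 2 / 2))
      ≤ 2 * π * ((a+b).factorial : ℝ) * rexp t := by
  have hprod := integral_prod_mul (μ := (volume : Measure ℝ)) (ν := (volume : Measure ℝ))
    (f := fun ξ : ℝ => (ξ ^ 2 + t) ^ a * rexp (-ξ ^ 2 / 2))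
    (g := fun ξ : ℝ => (ξ ^ 2 + t) ^ b * rexp (-ξ ^ 2 / 2))
  rw [← hprod]
  have hintL : Integrable (fun z : ℝ × ℝ =>
      ((z.1 ^ 2 + t) ^ a * rexp (-z.1 ^ 2 / 2)) * ((z.2 ^ 2 + t) ^ b * rexp (-z.2 ^ 2 / 2)))
      ((volume : Measure ℝ).prod volume) :=
    (integrable_sq_add_pow t a).mul_prod (integrable_sq_add_pow t b)
  rcases (by omega : a = b ∨ a = b + 1) with rfl | rfl
  ·
    calc ∫ z : ℝ × ℝ, ((z.1 ^ 2 + t) ^ a * rexp (-z.1 ^ 2 / 2)) *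
            ((z.2 ^ 2 + t) ^ a * rexp (-z.2 ^ 2 / 2))
            ∂((volume : Measure ℝ).prod volume)
        ≤ ∫ z : ℝ × ℝ, ((z.1 ^ 2 + z.2 ^ 2)/2 + t) ^ (2*a) *
            (rexp (-z.1 ^ 2 / 2) * rexp (-z.2 ^ 2 / 2))
            ∂((volume : Measure ℝ).prod volume) := by
          apply integral_mono hintL (EMt_int t (2*a))
          intro z
          have := amgm_pow t ht a z.1 z.2
          have hexp : (0:ℝ) ≤ rexp (-z.1 ^ 2 / 2) * rexp (-z.2 ^ 2 / 2) := by positivity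
          calc ((z.1 ^ 2 + t) ^ a * rexp (-z.1 ^ 2 / 2)) *
                ((z.2 ^ 2 + t) ^ a * rexp (-z.2 ^ 2 / 2))
              = ((z.1 ^ 2 + t) * (z.2 ^ 2 + t)) ^ a *
                (rexp (-z.1 ^ 2 / 2) * rexp (-z.2 ^ 2 / 2)) := by
                rw [mul_pow]; ring
            _ ≤ ((z.1 ^ 2 + z.2 ^ 2)/2 + t) ^ (2*a) *
                (rexp (-z.1 ^ 2 / 2) * rexp (-z.2 ^ 2 / 2)) :=
                mul_le_mul_of_nonneg_right this hexp
      _ ≤ 2 * π * ((2*a).factorial : ℝ) * rexp t := EMt_le t ht (2*a)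
      _ = 2 * π * ((a+a).factorial : ℝ) * rexp t := by rw [show 2*a = a + a by ring]
  · -- a = b + 1 case
    calc ∫ z : ℝ × ℝ, ((z.1 ^ 2 + t) ^ (b+1) * rexp (-z.1 ^ 2 / 2)) *
            ((z.2 ^ 2 + t) ^ b * rexp (-z.2 ^ 2 / 2))
            ∂((volume : Measure ℝ).prod volume)
        ≤ ∫ z : ℝ × ℝ, (z.1 ^ 2 + t) * (((z.1 ^ 2 + z.2 ^ 2)/2 + t) ^ (2*b) *
            (rexp (-z.1 ^ 2 / 2) * rexp (-z.2 ^ 2 / 2)))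
            ∂((volume : Measure ℝ).prod volume) := by
          have hintR : Integrable (fun z : ℝ × ℝ => (z.1 ^ 2 + t) *
              (((z.1 ^ 2 + z.2 ^ 2)/2 + t) ^ (2*b) *
                (rexp (-z.1 ^ 2 / 2) * rexp (-z.2 ^ 2 / 2))))
              ((volume : Measure ℝ).prod volume) := by
            have heq : (fun z : ℝ × ℝ => (z.1 ^ 2 + t) *
                (((z.1 ^ 2 + z.2 ^ 2)/2 + t) ^ (2*b) *
                  (rexp (-z.1 ^ 2 / 2) * rexp (-z.2 ^ 2 / 2))))
                = fun z => z.1 ^ 2 * (((z.1 ^ 2 + z.2 ^ 2)/2 + t) ^ (2*b) *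
                  (rexp (-z.1 ^ 2 / 2) * rexp (-z.2 ^ 2 / 2)))
                  + t * (((z.1 ^ 2 + z.2 ^ 2)/2 + t) ^ (2*b) *
                  (rexp (-z.1 ^ 2 / 2) * rexp (-z.2 ^ 2 / 2))) := by
              funext z; ring
            rw [heq]
            exact (sqEMt_int t (2*b)).add ((EMt_int t (2*b)).const_mul t)
          apply integral_mono hintL hintR
          intro z
          have hAM := amgm_pow t ht b z.1 z.2
          have hexp : (0:ℝ) ≤ rexp (-z.1 ^ 2 / 2) * rexp (-z.2 ^ 2 / 2) := by positivity
          have hz1 : (0:ℝ) ≤ z.1 ^ 2 + t := by positivity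
          calc ((z.1 ^ 2 + t) ^ (b+1) * rexp (-z.1 ^ 2 / 2)) *
                ((z.2 ^ 2 + t) ^ b * rexp (-z.2 ^ 2 / 2))
              = (z.1 ^ 2 + t) * (((z.1 ^ 2 + t) * (z.2 ^ 2 + t)) ^ b *
                (rexp (-z.1 ^ 2 / 2) * rexp (-z.2 ^ 2 / 2))) := by
                rw [mul_pow, pow_succ]; ring
            _ ≤ (z.1 ^ 2 + t) * (((z.1 ^ 2 + z.2 ^ 2)/2 + t) ^ (2*b) *
                (rexp (-z.1 ^ 2 / 2) * rexp (-z.2 ^ 2 / 2))) := by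
                apply mul_le_mul_of_nonneg_left ?_ hz1
                exact mul_le_mul_of_nonneg_right hAM hexp
      _ = ∫ z : ℝ × ℝ, (((z.1 ^ 2 + z.2 ^ 2)/2 + t) ^ (2*b+1) *
            (rexp (-z.1 ^ 2 / 2) * rexp (-z.2 ^ 2 / 2)))
            + ((z.1 ^ 2 - z.2 ^ 2)/2) * (((z.1 ^ 2 + z.2 ^ 2)/2 + t) ^ (2*b) *
            (rexp (-z.1 ^ 2 / 2) * rexp (-z.2 ^ 2 / 2)))
            ∂((volume : Measure ℝ).prod volume) := by
          congr 1
          funext z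
          rw [pow_succ]
          ring
      _ = (∫ z : ℝ × ℝ, ((z.1 ^ 2 + z.2 ^ 2)/2 + t) ^ (2*b+1) *
            (rexp (-z.1 ^ 2 / 2) * rexp (-z.2 ^ 2 / 2))
            ∂((volume : Measure ℝ).prod volume))
          + ∫ z : ℝ × ℝ, ((z.1 ^ 2 - z.2 ^ 2)/2) * (((z.1 ^ 2 + z.2 ^ 2)/2 + t) ^ (2*b) *
            (rexp (-z.1 ^ 2 / 2) * rexp (-z.2 ^ 2 / 2)))
            ∂((volume : Measure ℝ).prod volume) := by
          apply integral_add (EMt_int t (2*b+1))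
          have heq2 : (fun z : ℝ × ℝ => ((z.1 ^ 2 - z.2 ^ 2)/2) *
              (((z.1 ^ 2 + z.2 ^ 2)/2 + t) ^ (2*b) *
                (rexp (-z.1 ^ 2 / 2) * rexp (-z.2 ^ 2 / 2))))
              = fun z => (1/2 : ℝ) * (z.1 ^ 2 * (((z.1 ^ 2 + z.2 ^ 2)/2 + t) ^ (2*b) *
                  (rexp (-z.1 ^ 2 / 2) * rexp (-z.2 ^ 2 / 2))))
                - (1/2 : ℝ) * (z.2 ^ 2 * (((z.1 ^ 2 + z.2 ^ 2)/2 + t) ^ (2*b) *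
                  (rexp (-z.1 ^ 2 / 2) * rexp (-z.2 ^ 2 / 2)))) := by
            funext z; ring
          rw [heq2]
          exact ((sqEMt_int t (2*b)).const_mul _).sub ((sqEMt_int' t (2*b)).const_mul _)
      _ = ∫ z : ℝ × ℝ, ((z.1 ^ 2 + z.2 ^ 2)/2 + t) ^ (2*b+1) *
            (rexp (-z.1 ^ 2 / 2) * rexp (-z.2 ^ 2 / 2))
            ∂((volume : Measure ℝ).prod volume) := by
          rw [antisym_zero t (2*b)]
          ring
      _ ≤ 2 * π * ((2*b+1).factorial : ℝ) * rexp t := EMt_le t ht (2*b+1)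
      _ = 2 * π * (((b+1)+b).factorial : ℝ) * rexp t := by rw [show 2*b+1 = (b+1)+b by ring]

/-- The key 1D estimate via Cauchy-Schwarz. -/
lemma In_le (t : ℝ) (ht : 0 ≤ t) (n : ℕ) :
    ∫ ξ : ℝ, Real.sqrt (ξ ^ 2 + t) ^ n * rexp (-ξ ^ 2 / 2)
      ≤ Real.sqrt (2 * π * (n.factorial : ℝ) * rexp t) := by
  set a := n - n / 2 with hadef
  set b := n / 2 with hbdef
  have hab : a + b = n := by omega
  have hba : b ≤ a := by omega
  have hab1 : a ≤ b + 1 := by omega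
  set A := ∫ ξ : ℝ, (ξ ^ 2 + t) ^ a * rexp (-ξ ^ 2 / 2) with hA
  set B := ∫ ξ : ℝ, (ξ ^ 2 + t) ^ b * rexp (-ξ ^ 2 / 2) with hB
  have hApos := sq_add_pow_integral_pos t ht a
  have hBpos := sq_add_pow_integral_pos t ht b
  set lam := Real.sqrt (B / A) with hlam
  have hlampos : 0 < lam := Real.sqrt_pos.mpr (div_pos hBpos hApos)
  have hpt : ∀ ξ : ℝ, Real.sqrt (ξ ^ 2 + t) ^ n * rexp (-ξ ^ 2 / 2)
      ≤ (lam/2) * ((ξ ^ 2 + t) ^ a * rexp (-ξ ^ 2 / 2))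
        + (1/(2*lam)) * ((ξ ^ 2 + t) ^ b * rexp (-ξ ^ 2 / 2)) := by
    intro ξ
    have hs : (0:ℝ) ≤ ξ ^ 2 + t := by positivity
    set u := Real.sqrt (ξ ^ 2 + t) ^ a with hu
    set v := Real.sqrt (ξ ^ 2 + t) ^ b with hv
    have hu2 : u ^ 2 = (ξ ^ 2 + t) ^ a := by
      rw [hu, ← pow_mul, mul_comm a 2, pow_mul, Real.sq_sqrt hs]
    have hv2 : v ^ 2 = (ξ ^ 2 + t) ^ b := by
      rw [hv, ← pow_mul, mul_comm b 2, pow_mul, Real.sq_sqrt hs]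
    have huv : Real.sqrt (ξ ^ 2 + t) ^ n = u * v := by
      rw [hu, hv, ← pow_add, hab]
    have hE : (0:ℝ) < rexp (-ξ ^ 2 / 2) := Real.exp_pos _
    have key : u * v ≤ (lam/2) * u ^ 2 + (1/(2*lam)) * v ^ 2 := by
      have h2 : 2*lam*(u*v) ≤ 2*lam*((lam/2) * u ^ 2 + (1/(2*lam)) * v ^ 2) := by
        have he : 2*lam*((lam/2) * u ^ 2 + (1/(2*lam)) * v ^ 2) = lam^2*u^2 + v^2 := by
          field_simp
        rw [he]
        nlinarith [sq_nonneg (lam * u - v)]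
      exact le_of_mul_le_mul_left h2 (by positivity)
    calc Real.sqrt (ξ ^ 2 + t) ^ n * rexp (-ξ ^ 2 / 2) = (u * v) * rexp (-ξ ^ 2 / 2) := by
          rw [huv]
      _ ≤ ((lam/2) * u ^ 2 + (1/(2*lam)) * v ^ 2) * rexp (-ξ ^ 2 / 2) :=
          mul_le_mul_of_nonneg_right key hE.le
      _ = (lam/2) * (u ^ 2 * rexp (-ξ ^ 2 / 2))
          + (1/(2*lam)) * (v ^ 2 * rexp (-ξ ^ 2 / 2)) := by ring
      _ = _ := by rw [hu2, hv2]
  have hintL : Integrable (fun ξ : ℝ => Real.sqrt (ξ ^ 2 + t) ^ n * rexp (-ξ ^ 2 / 2)) := by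
    refine (integrable_sq_add_pow (t+1) n).mono' ?_ ?_
    · apply Continuous.aestronglyMeasurable
      apply Continuous.mul ?_ (by fun_prop)
      exact (Real.continuous_sqrt.comp (by fun_prop)).pow n
    · filter_upwards with ξ
      rw [Real.norm_eq_abs, abs_of_nonneg (by positivity)]
      have hs : (0:ℝ) ≤ ξ ^ 2 + t := by positivity
      have h1 : Real.sqrt (ξ ^ 2 + t) ≤ ξ ^ 2 + (t+1) := by
        nlinarith [Real.sq_sqrt hs, Real.sqrt_nonneg (ξ ^ 2 + t),
          sq_nonneg (Real.sqrt (ξ ^ 2 + t) - 1)]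
      have h2 : Real.sqrt (ξ ^ 2 + t) ^ n ≤ (ξ ^ 2 + (t+1)) ^ n :=
        pow_le_pow_left₀ (Real.sqrt_nonneg _) h1 n
      exact mul_le_mul_of_nonneg_right h2 (Real.exp_pos _).le
  calc ∫ ξ : ℝ, Real.sqrt (ξ ^ 2 + t) ^ n * rexp (-ξ ^ 2 / 2)
      ≤ ∫ ξ : ℝ, ((lam/2) * ((ξ ^ 2 + t) ^ a * rexp (-ξ ^ 2 / 2))
          + (1/(2*lam)) * ((ξ ^ 2 + t) ^ b * rexp (-ξ ^ 2 / 2))) := by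
        apply integral_mono hintL ?_ hpt
        exact ((integrable_sq_add_pow t a).const_mul _).add
          ((integrable_sq_add_pow t b).const_mul _)
    _ = (lam/2) * A + (1/(2*lam)) * B := by
        rw [integral_add ((integrable_sq_add_pow t a).const_mul _)
          ((integrable_sq_add_pow t b).const_mul _), integral_const_mul, integral_const_mul]
    _ = Real.sqrt A * Real.sqrt B := by
        have hsa : 0 < Real.sqrt A := Real.sqrt_pos.mpr hApos
        have hsb : 0 < Real.sqrt B := Real.sqrt_pos.mpr hBpos
        have hA2 : Real.sqrt A ^ 2 = A := Real.sq_sqrt hApos.le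
        have hB2 : Real.sqrt B ^ 2 = B := Real.sq_sqrt hBpos.le
        have hlam2 : lam = Real.sqrt B / Real.sqrt A := by
          rw [hlam, Real.sqrt_div hBpos.le]
        rw [hlam2]
        field_simp
        linear_combination (-Real.sqrt B^2) * hA2 + (-Real.sqrt A^2) * hB2
    _ = Real.sqrt (A * B) := (Real.sqrt_mul hApos.le B).symm
    _ ≤ Real.sqrt (2 * π * (n.factorial : ℝ) * rexp t) := by
        apply Real.sqrt_le_sqrt
        have := prod_le t ht a b hba hab1
        rw [hab] at this
        exact this

/-! ### Complex integral representation of Hermite polynomials -/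

noncomputable def uu (x : ℝ) : ℝ → ℂ := fun ξ => ((x/2 : ℝ) : ℂ) + (ξ:ℂ) * Complex.I

noncomputable def EE (x : ℝ) : ℝ → ℂ := fun ξ =>
  Complex.exp (((-(x/2) : ℝ) : ℂ) * Complex.I * (ξ:ℂ) + ((-(1/2) : ℝ) : ℂ) * (ξ:ℂ)^2)

noncomputable def JJ (x : ℝ) (n : ℕ) : ℂ := ∫ ξ : ℝ, (uu x ξ)^n * EE x ξ

noncomputable def KK (x : ℝ) (n : ℕ) : ℂ := ∫ ξ : ℝ, (ξ:ℂ) * ((uu x ξ)^n * EE x ξ)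

lemma normEE (x ξ : ℝ) : ‖EE x ξ‖ = rexp (-ξ^2/2) := by
  have hre : ((((-(x/2) : ℝ) : ℂ) * Complex.I * (ξ:ℂ) + ((-(1/2) : ℝ) : ℂ) * (ξ:ℂ)^2)).re
      = -ξ^2/2 := by
    simp [sq, Complex.add_re, Complex.mul_re, Complex.mul_im, Complex.I_re, Complex.I_im,
      Complex.ofReal_re, Complex.ofReal_im]
    ring
  rw [EE, Complex.norm_exp, hre]

lemma norm_uu (x ξ : ℝ) : ‖uu x ξ‖ = Real.sqrt (ξ^2 + x^2/4) := by
  rw [uu, Complex.norm_def, Complex.normSq_apply]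
  have h1 : ((((x/2 : ℝ) : ℂ) + (ξ:ℂ) * Complex.I)).re = x/2 := by
    simp [Complex.add_re, Complex.mul_re, Complex.I_re, Complex.I_im]
  have h2 : ((((x/2 : ℝ) : ℂ) + (ξ:ℂ) * Complex.I)).im = ξ := by
    simp [Complex.add_im, Complex.mul_im, Complex.I_re, Complex.I_im]
  rw [h1, h2]
  congr 1
  ring

lemma norm_integrand (x : ℝ) (n : ℕ) (ξ : ℝ) :
    ‖(uu x ξ)^n * EE x ξ‖ = Real.sqrt (ξ^2 + x^2/4) ^ n * rexp (-ξ^2/2) := by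
  rw [norm_mul, norm_pow, norm_uu, normEE]

lemma sqrt_shift_bound (x ξ : ℝ) : Real.sqrt (ξ^2 + x^2/4) ≤ |x|/2 + |ξ| := by
  have h : ξ^2 + x^2/4 ≤ (|x|/2 + |ξ|)^2 := by
    nlinarith [sq_abs x, sq_abs ξ, mul_nonneg (abs_nonneg x) (abs_nonneg ξ)]
  calc Real.sqrt (ξ^2 + x^2/4) ≤ Real.sqrt ((|x|/2 + |ξ|)^2) := Real.sqrt_le_sqrt h
    _ = |x|/2 + |ξ| := Real.sqrt_sq (by positivity)

/-- dominating functions -/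
lemma domf_expand (c : ℝ) (k : ℕ) :
    (fun ξ : ℝ => (c + |ξ|)^k * rexp (-ξ^2/2))
    = fun ξ => ∑ m ∈ range (k+1), (c^m * (k.choose m : ℝ)) * (|ξ|^(k-m) * rexp (-ξ^2/2)) := by
  funext ξ
  rw [add_pow, Finset.sum_mul]
  apply Finset.sum_congr rfl
  intro m _
  ring

lemma domf_int (c : ℝ) (k : ℕ) :
    Integrable (fun ξ : ℝ => (c + |ξ|)^k * rexp (-ξ^2/2)) := by
  rw [domf_expand]
  exact integrable_finset_sum _ (fun m _ => (integrable_abs_pow_gauss (k-m)).const_mul _)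

lemma domf_mul_int (c : ℝ) (k : ℕ) :
    Integrable (fun ξ : ℝ => |ξ| * ((c + |ξ|)^k * rexp (-ξ^2/2))) := by
  have h : (fun ξ : ℝ => |ξ| * ((c + |ξ|)^k * rexp (-ξ^2/2)))
      = fun ξ => ∑ m ∈ range (k+1), (c^m * (k.choose m : ℝ)) *
          (|ξ|^(k-m+1) * rexp (-ξ^2/2)) := by
    funext ξ
    rw [congrFun (domf_expand c k) ξ, Finset.mul_sum]
    apply Finset.sum_congr rfl
    intro m _
    rw [pow_succ]
    ring
  rw [h]
  exact integrable_finset_sum _ (fun m _ => (integrable_abs_pow_gauss (k-m+1)).const_mul _)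

lemma domf_tendsto_atTop (c : ℝ) (k : ℕ) :
    Tendsto (fun ξ : ℝ => (c + |ξ|)^k * rexp (-ξ^2/2)) atTop (nhds 0) := by
  rw [domf_expand]
  have h : Tendsto (fun ξ : ℝ => ∑ m ∈ range (k+1),
      (c^m * (k.choose m : ℝ)) * (|ξ|^(k-m) * rexp (-ξ^2/2))) atTop
      (nhds (∑ m ∈ range (k+1), (0:ℝ))) := by
    apply tendsto_finset_sum
    intro m _
    simpa using (tendsto_abs_pow_gauss_atTop (k-m)).const_mul (c^m * (k.choose m : ℝ))
  simpa using h

lemma domf_tendsto_atBot (c : ℝ) (k : ℕ) :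
    Tendsto (fun ξ : ℝ => (c + |ξ|)^k * rexp (-ξ^2/2)) atBot (nhds 0) := by
  rw [domf_expand]
  have h : Tendsto (fun ξ : ℝ => ∑ m ∈ range (k+1),
      (c^m * (k.choose m : ℝ)) * (|ξ|^(k-m) * rexp (-ξ^2/2))) atBot
      (nhds (∑ m ∈ range (k+1), (0:ℝ))) := by
    apply tendsto_finset_sum
    intro m _
    simpa using (tendsto_abs_pow_gauss_atBot (k-m)).const_mul (c^m * (k.choose m : ℝ))
  simpa using h

lemma continuous_uu (x : ℝ) : Continuous (uu x) := by
  unfold uu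
  exact continuous_const.add (Complex.continuous_ofReal.mul continuous_const)

lemma continuous_EE (x : ℝ) : Continuous (EE x) := by
  unfold EE
  apply Complex.continuous_exp.comp
  exact ((continuous_const.mul Complex.continuous_ofReal).add
    (continuous_const.mul (Complex.continuous_ofReal.pow 2)))

lemma norm_integrand_le (x : ℝ) (n : ℕ) (ξ : ℝ) :
    ‖(uu x ξ)^n * EE x ξ‖ ≤ (|x|/2 + |ξ|)^n * rexp (-ξ^2/2) := by
  rw [norm_integrand]
  apply mul_le_mul_of_nonneg_right ?_ (Real.exp_pos _).le
  exact pow_le_pow_left₀ (Real.sqrt_nonneg _) (sqrt_shift_bound x ξ) n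

lemma intJ (x : ℝ) (n : ℕ) : Integrable (fun ξ : ℝ => (uu x ξ)^n * EE x ξ) := by
  refine (domf_int (|x|/2) n).mono' ?_ ?_
  · exact (((continuous_uu x).pow n).mul (continuous_EE x)).aestronglyMeasurable
  · filter_upwards with ξ
    exact norm_integrand_le x n ξ

lemma intK (x : ℝ) (n : ℕ) :
    Integrable (fun ξ : ℝ => (ξ:ℂ) * ((uu x ξ)^n * EE x ξ)) := by
  refine (domf_mul_int (|x|/2) n).mono' ?_ ?_
  · exact (Complex.continuous_ofReal.mul
      (((continuous_uu x).pow n).mul (continuous_EE x))).aestronglyMeasurable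
  · filter_upwards with ξ
    rw [norm_mul, Complex.norm_real, Real.norm_eq_abs]
    apply mul_le_mul_of_nonneg_left (norm_integrand_le x n ξ) (abs_nonneg ξ)

lemma tendsto_g_atTop (x : ℝ) (n : ℕ) :
    Tendsto (fun ξ : ℝ => (uu x ξ)^n * EE x ξ) atTop (nhds 0) :=
  squeeze_zero_norm (norm_integrand_le x n) (domf_tendsto_atTop (|x|/2) n)

lemma tendsto_g_atBot (x : ℝ) (n : ℕ) :
    Tendsto (fun ξ : ℝ => (uu x ξ)^n * EE x ξ) atBot (nhds 0) :=
  squeeze_zero_norm (norm_integrand_le x n) (domf_tendsto_atBot (|x|/2) n)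

lemma hasDeriv_ofReal (ξ : ℝ) : HasDerivAt (fun ξ : ℝ => (ξ:ℂ)) 1 ξ := by
  simpa using (hasDerivAt_id ξ).ofReal_comp

lemma hasDeriv_uu (x ξ : ℝ) : HasDerivAt (uu x) Complex.I ξ := by
  unfold uu
  have h := (hasDeriv_ofReal ξ).mul_const Complex.I
  have h2 := h.const_add (((x/2 : ℝ) : ℂ))
  simpa using h2

lemma hasDeriv_uu_pow (x : ℝ) (n : ℕ) (ξ : ℝ) :
    HasDerivAt (fun ξ : ℝ => (uu x ξ)^n) ((n:ℂ) * (uu x ξ)^(n-1) * Complex.I) ξ := by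
  induction n with
  | zero => simpa using hasDerivAt_const ξ (1:ℂ)
  | succ n ih =>
    have h2 := ih.fun_mul (hasDeriv_uu x ξ)
    have h3 : (fun ξ : ℝ => (uu x ξ)^n * uu x ξ) = fun ξ : ℝ => (uu x ξ)^(n+1) := by
      funext ξ; rw [← pow_succ]
    rw [h3] at h2
    refine h2.congr_deriv ?_
    rcases Nat.eq_zero_or_pos n with rfl | hn
    · simp
    · have hn1 : n - 1 + 1 = n := by omega
      have : (uu x ξ)^n = (uu x ξ)^(n-1) * uu x ξ := by
        rw [← pow_succ, hn1]
      rw [Nat.add_sub_cancel, this]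
      push_cast
      ring

lemma hasDeriv_EE (x ξ : ℝ) :
    HasDerivAt (EE x) (EE x ξ * (((-(x/2) : ℝ) : ℂ) * Complex.I - (ξ:ℂ))) ξ := by
  have h1 := (hasDeriv_ofReal ξ).const_mul (((-(x/2) : ℝ) : ℂ) * Complex.I)
  have hsq : HasDerivAt (fun ξ : ℝ => ((ξ:ℂ))^2) (2*(ξ:ℂ)) ξ := by
    have h := (hasDeriv_ofReal ξ).fun_mul (hasDeriv_ofReal ξ)
    have heq : (fun ξ : ℝ => ((ξ:ℂ)) * ((ξ:ℂ))) = fun ξ : ℝ => ((ξ:ℂ))^2 := by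
      funext ξ; ring
    rw [heq] at h
    refine h.congr_deriv ?_
    ring
  have h2 := hsq.const_mul (((-(1/2) : ℝ) : ℂ))
  have h3 := (h1.fun_add h2).cexp
  unfold EE
  convert h3 using 1
  push_cast
  ring

lemma ibp_eq (x : ℝ) (n : ℕ) :
    (n:ℂ) * Complex.I * JJ x (n-1)
      + ((((-(x/2) : ℝ) : ℂ) * Complex.I) * JJ x n - KK x n) = 0 := by
  set c : ℂ := ((-(x/2) : ℝ) : ℂ) * Complex.I with hc
  have hderiv : ∀ ξ : ℝ, HasDerivAt (fun ξ : ℝ => (uu x ξ)^n * EE x ξ)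
      ((n:ℂ) * Complex.I * ((uu x ξ)^(n-1) * EE x ξ)
        + (c * ((uu x ξ)^n * EE x ξ) - (ξ:ℂ) * ((uu x ξ)^n * EE x ξ))) ξ := by
    intro ξ
    have h1 := (hasDeriv_uu_pow x n ξ).fun_mul (hasDeriv_EE x ξ)
    refine h1.congr_deriv ?_
    rw [hc]
    ring
  have hsub : Integrable (fun ξ : ℝ =>
      c * ((uu x ξ)^n * EE x ξ) - (ξ:ℂ) * ((uu x ξ)^n * EE x ξ)) :=
    ((intJ x n).const_mul _).sub (intK x n)
  have hint : Integrable (fun ξ : ℝ => (n:ℂ) * Complex.I * ((uu x ξ)^(n-1) * EE x ξ)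
      + (c * ((uu x ξ)^n * EE x ξ) - (ξ:ℂ) * ((uu x ξ)^n * EE x ξ))) :=
    ((intJ x (n-1)).const_mul _).add hsub
  have h0 := integral_deriv_eq_zero hderiv hint (tendsto_g_atBot x n) (tendsto_g_atTop x n)
  rw [integral_add ((intJ x (n-1)).const_mul _) hsub,
    integral_sub ((intJ x n).const_mul _) (intK x n),
    integral_const_mul, integral_const_mul] at h0
  exact h0

lemma KK_eq (x : ℝ) (n : ℕ) :
    KK x n = (n:ℂ) * Complex.I * JJ x (n-1)
      + (((-(x/2) : ℝ) : ℂ) * Complex.I) * JJ x n := by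
  have h := ibp_eq x n
  linear_combination -h

lemma JJ_succ (x : ℝ) (n : ℕ) :
    JJ x (n+1) = (x:ℂ) * JJ x n - (n:ℂ) * JJ x (n-1) := by
  have hsplit : JJ x (n+1) = ((x/2 : ℝ) : ℂ) * JJ x n + Complex.I * KK x n := by
    have h : (fun ξ : ℝ => (uu x ξ)^(n+1) * EE x ξ)
        = fun ξ : ℝ => ((x/2 : ℝ) : ℂ) * ((uu x ξ)^n * EE x ξ)
          + Complex.I * ((ξ:ℂ) * ((uu x ξ)^n * EE x ξ)) := by
      funext ξ
      have huu : (uu x ξ)^(n+1) = (((x/2 : ℝ) : ℂ) + (ξ:ℂ) * Complex.I) * (uu x ξ)^n := by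
        rw [pow_succ]
        unfold uu
        ring
      rw [huu]
      ring
    rw [JJ, h, integral_add ((intJ x n).const_mul _) ((intK x n).const_mul _),
      integral_const_mul, integral_const_mul]
    rfl
  rw [hsplit, KK_eq x n]
  have hI : Complex.I * Complex.I = -1 := Complex.I_mul_I
  push_cast
  linear_combination ((n:ℂ) * JJ x (n-1) - ((x:ℂ)/2) * JJ x n) * hI

lemma JJ_zero (x : ℝ) :
    JJ x 0 = ((Real.sqrt (2*π) : ℝ) : ℂ) * Complex.exp (((-(x^2/8) : ℝ) : ℂ)) := by
  have h : (fun ξ : ℝ => (uu x ξ)^0 * EE x ξ)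
      = fun ξ : ℝ => Complex.exp (((-(1/2) : ℝ) : ℂ) * (ξ:ℂ)^2
          + (((-(x/2) : ℝ) : ℂ) * Complex.I) * (ξ:ℂ) + 0) := by
    funext ξ
    rw [pow_zero, one_mul, EE]
    congr 1
    ring
  rw [JJ, h, integral_cexp_quadratic
    (by rw [Complex.ofReal_re]; norm_num : (((-(1/2) : ℝ) : ℂ)).re < 0)]
  have e1 : ((π:ℂ) / -(((-(1/2) : ℝ) : ℂ))) = (((2*π : ℝ)) : ℂ) := by
    push_cast
    ring
  have e2 : ((0:ℂ) - ((((-(x/2) : ℝ) : ℂ) * Complex.I))^2 / (4 * (((-(1/2) : ℝ) : ℂ))))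
      = ((-(x^2/8) : ℝ) : ℂ) := by
    rw [mul_pow, Complex.I_sq]
    push_cast
    ring
  rw [e1, e2]
  congr 1
  rw [show ((1:ℂ)/2) = (((1/2 : ℝ)):ℂ) by norm_num,
    ← Complex.ofReal_cpow (by positivity : (0:ℝ) ≤ 2*π) (1/2), ← Real.sqrt_eq_rpow]

lemma JJ_He (x : ℝ) (n : ℕ) : JJ x n = ((He n x : ℝ) : ℂ) * JJ x 0 := by
  have key : ∀ m : ℕ, JJ x m = ((He m x : ℝ) : ℂ) * JJ x 0 ∧
      JJ x (m+1) = ((He (m+1) x : ℝ) : ℂ) * JJ x 0 := by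
    intro m
    induction m with
    | zero =>
      constructor
      · simp [He]
      · have h := JJ_succ x 0
        simp only [Nat.cast_zero, zero_mul, sub_zero] at h
        rw [h]
        simp [He]
    | succ k ih =>
      refine ⟨ih.2, ?_⟩
      have h := JJ_succ x (k+1)
      rw [Nat.add_sub_cancel] at h
      rw [h, ih.1, ih.2]
      have hHe : He (k+2) x = x * He (k+1) x - (k+1 : ℝ) * He k x := by
        simp [He]
      rw [hHe]
      push_cast
      ring
  exact (key n).1

lemma JJ_zero_norm (x : ℝ) : ‖JJ x 0‖ = Real.sqrt (2*π) * rexp (-(x^2/8)) := by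
  rw [JJ_zero, norm_mul, Complex.norm_real, Real.norm_eq_abs,
    Complex.norm_exp, Complex.ofReal_re, abs_of_nonneg (Real.sqrt_nonneg _)]

/-- Cramer's inequality for the unnormalised Hermite polynomials. -/
lemma He_bound (n : ℕ) (x : ℝ) :
    |He n x| ≤ Real.sqrt ((n.factorial : ℝ)) * rexp (x^2/4) := by
  have h1 : ‖JJ x n‖ = |He n x| * (Real.sqrt (2*π) * rexp (-(x^2/8))) := by
    rw [JJ_He x n, norm_mul, JJ_zero_norm, Complex.norm_real, Real.norm_eq_abs]
  have h2 : ‖JJ x n‖ ≤ ∫ ξ : ℝ, Real.sqrt (ξ^2 + x^2/4) ^ n * rexp (-ξ^2/2) := by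
    calc ‖JJ x n‖ ≤ ∫ ξ : ℝ, ‖(uu x ξ)^n * EE x ξ‖ := norm_integral_le_integral_norm _
      _ = _ := by
          congr 1
          funext ξ
          exact norm_integrand x n ξ
  have h3 := In_le (x^2/4) (by positivity) n
  have hsq : Real.sqrt (2 * π * (n.factorial : ℝ) * rexp (x^2/4))
      = Real.sqrt (2*π) * Real.sqrt ((n.factorial : ℝ)) * rexp (x^2/8) := by
    rw [Real.sqrt_mul (by positivity : (0:ℝ) ≤ 2*π*(n.factorial : ℝ)),
      Real.sqrt_mul (by positivity : (0:ℝ) ≤ 2*π)]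
    congr 1
    rw [show rexp (x^2/4) = rexp (x^2/8) * rexp (x^2/8) from by
      rw [← Real.exp_add]; ring_nf]
    exact Real.sqrt_mul_self (Real.exp_pos _).le
  have h4 : |He n x| * (Real.sqrt (2*π) * rexp (-(x^2/8)))
      ≤ Real.sqrt (2*π) * Real.sqrt ((n.factorial : ℝ)) * rexp (x^2/8) := by
    rw [← h1, ← hsq]
    exact le_trans h2 h3
  have hpos : (0:ℝ) < Real.sqrt (2*π) * rexp (-(x^2/8)) := by positivity
  rw [← le_div_iff₀ hpos] at h4
  calc |He n x| ≤ Real.sqrt (2*π) * Real.sqrt ((n.factorial : ℝ)) * rexp (x^2/8)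
        / (Real.sqrt (2*π) * rexp (-(x^2/8))) := h4
    _ = Real.sqrt ((n.factorial : ℝ)) * (rexp (x^2/8) * rexp (x^2/8)) := by
        have hs : Real.sqrt (2*π) ≠ 0 := by positivity
        have he : rexp (-(x^2/8)) ≠ 0 := (Real.exp_pos _).ne'
        rw [Real.exp_neg]
        field_simp
    _ = Real.sqrt ((n.factorial : ℝ)) * rexp (x^2/4) := by
        rw [← Real.exp_add]
        ring_nf

end CramerProof

/-- Cramer's inequality: `|h_n(x)| ≤ exp(x²/4)`. -/
theorem hermite_normalised_bound (n : ℕ) (x : ℝ) :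
    |hpoly n x| ≤ Real.exp (x ^ 2 / 4) := by
  have hb := CramerProof.He_bound n x
  rw [hpoly, abs_div, abs_of_nonneg (Real.sqrt_nonneg _)]
  have hpos : 0 < Real.sqrt ((Nat.factorial n : ℝ)) :=
    Real.sqrt_pos.mpr (by positivity)
  rw [div_le_iff₀ hpos]
  calc |He n x| ≤ Real.sqrt ((Nat.factorial n : ℝ)) * Real.exp (x ^ 2 / 4) := hb
    _ = Real.exp (x ^ 2 / 4) * Real.sqrt ((Nat.factorial n : ℝ)) := by ring
end

section
/- For every nonnegative integer k, any x, x' ∈ ℝ^d, and any orthogonal matrix R ∈ O(d), the sum over multi-indices α ∈ ℕ^d with |α| = k of H_α(x)·H_α(x') equals the sum over the same multi-indices of H_α(Rx)·H_α(Rx'). In other words, the degree-k Hermite kernel ∑_{|α|=k} H_α(x)H_α(x') is invariant under simultaneous rotation of both arguments. -/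
open Matrix

/-- Multivariate Hermite polynomials `H_α(x) = ∏_a h_{α_a}(x_a)`. -/
noncomputable def Hmul {d : ℕ} (α : Fin d → ℕ) (x : Fin d → ℝ) : ℝ :=
  ∏ a, hpoly (α a) (x a)

namespace HermiteRot

open MvPolynomial

noncomputable def μ : ℕ → ℝ
  | 0 => 1
  | 1 => 0
  | n + 2 => -((n : ℝ) + 1) * μ n

lemma μ_succ (n : ℕ) : μ (n + 1) = -(n : ℝ) * μ (n - 1) := by
  cases n with
  | zero => simp [μ]
  | succ m => simp [μ]

variable {σ : Type*} [Fintype σ] [DecidableEq σ]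

noncomputable def mprod (s : σ →₀ ℕ) : ℝ := ∏ a, μ (s a)

lemma mprod_zero : mprod (0 : σ →₀ ℕ) = 1 := by simp [mprod, μ]

noncomputable def gmomA : MvPolynomial σ ℝ →+ ℝ where
  toFun P := (AddMonoidAlgebra.coeff P).sum fun s c => c * mprod s
  map_zero' := Finsupp.sum_zero_index
  map_add' P Q := by
    show (AddMonoidAlgebra.coeff (P + Q)).sum (fun s c => c * mprod s) = ((AddMonoidAlgebra.coeff P).sum fun s c => c * mprod s) + ((AddMonoidAlgebra.coeff Q).sum fun s c => c * mprod s)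
    exact Finsupp.sum_add_index' (fun s => zero_mul _) (fun s b c => add_mul b c _)

lemma gmomA_monomial (s : σ →₀ ℕ) (c : ℝ) :
    gmomA (monomial s c) = c * mprod s := by
  show (AddMonoidAlgebra.coeff (monomial s c)).sum (fun s c => c * mprod s) = c * mprod s
  exact MvPolynomial.sum_monomial_eq (zero_mul _)

noncomputable def gmom : MvPolynomial σ ℝ →ₗ[ℝ] ℝ where
  toFun := gmomA
  map_add' := gmomA.map_add
  map_smul' r P := by
    simp only [RingHom.id_apply, smul_eq_mul]
    rw [P.as_sum, Finset.smul_sum, map_sum, map_sum, Finset.mul_sum]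
    refine Finset.sum_congr rfl fun s _ => ?_
    rw [smul_monomial, gmomA_monomial, gmomA_monomial, smul_eq_mul, mul_assoc]

lemma gmom_monomial (s : σ →₀ ℕ) (c : ℝ) :
    gmom (monomial s c) = c * mprod s := gmomA_monomial s c

lemma gmom_C_mul (c : ℝ) (P : MvPolynomial σ ℝ) : gmom (C c * P) = c * gmom P := by
  rw [C_mul', LinearMap.map_smul gmom, smul_eq_mul]

lemma mprod_single (i : σ) (n : ℕ) : mprod (Finsupp.single i n) = μ n := by
  unfold mprod
  rw [Finset.prod_eq_single i (fun b _ hb => by simp [Finsupp.single_apply, Ne.symm hb, μ])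
    (fun h => absurd (Finset.mem_univ i) h)]
  simp

lemma gmom_one : gmom (1 : MvPolynomial σ ℝ) = 1 := by
  rw [← C_1, ← monomial_zero', gmom_monomial, mprod_zero, mul_one]


lemma mprod_single_add (b : σ) (s : σ →₀ ℕ) :
    mprod (Finsupp.single b 1 + s) = -(s b : ℝ) * mprod (s - Finsupp.single b 1) := by
  unfold mprod
  have h4 : ∏ a : σ, μ (((s - Finsupp.single b 1 : σ →₀ ℕ) a))
      = μ (((s - Finsupp.single b 1 : σ →₀ ℕ) b)) * ∏ a ∈ Finset.univ.erase b, μ (((s - Finsupp.single b 1 : σ →₀ ℕ) a)) :=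
    (Finset.mul_prod_erase _ _ (Finset.mem_univ b)).symm
  rw [← Finset.mul_prod_erase Finset.univ _ (Finset.mem_univ b), h4]
  have h1 : ∀ a ∈ Finset.univ.erase b,
      μ ((Finsupp.single b 1 + s : σ →₀ ℕ) a) = μ (((s - Finsupp.single b 1 : σ →₀ ℕ) a)) := by
    intro a ha
    have hab : a ≠ b := Finset.ne_of_mem_erase ha
    simp [Finsupp.single_apply, hab.symm, Ne.symm hab]
  rw [Finset.prod_congr rfl h1]
  have h2 : ((Finsupp.single b 1 + s : σ →₀ ℕ) b) = s b + 1 := by simp [add_comm]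
  have h3 : ((s - Finsupp.single b 1 : σ →₀ ℕ) b) = s b - 1 := by simp
  rw [h2, h3, μ_succ]
  ring

lemma gmom_X_mul (b : σ) (P : MvPolynomial σ ℝ) :
    gmom (X b * P) = - gmom (pderiv b P) := by
  induction P using MvPolynomial.induction_on' with
  | monomial s c =>
    rw [pderiv_monomial]
    have hX : (X b : MvPolynomial σ ℝ) * monomial s c = monomial (Finsupp.single b 1 + s) c := by
      rw [← pow_one (X b : MvPolynomial σ ℝ), X_pow_eq_monomial, monomial_mul, one_mul]
    rw [hX, gmom_monomial, gmom_monomial, mprod_single_add]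
    ring
  | add p q hp hq =>
    rw [mul_add, map_add, map_add, map_add, hp, hq]
    ring


section Subst
variable (Q : σ → σ → ℝ)

noncomputable def subQ : MvPolynomial σ ℝ →ₐ[ℝ] MvPolynomial σ ℝ :=
  aeval fun a => ∑ b, C (Q a b) * X b

lemma subQ_X (a : σ) : subQ Q (X a) = ∑ b, C (Q a b) * X b := aeval_X _ _

lemma pderiv_lin (i b : σ) : pderiv b (∑ b', C (Q i b') * X b') = C (Q i b) := by
  rw [map_sum, Finset.sum_eq_single b]
  · rw [pderiv_C_mul, pderiv_X_self, mul_one]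
  · intro c _ hc
    rw [pderiv_C_mul, pderiv_X_of_ne hc, mul_zero]
  · intro h; exact absurd (Finset.mem_univ b) h

lemma pderiv_subQ (b : σ) (P : MvPolynomial σ ℝ) :
    pderiv b (subQ Q P) = ∑ c, C (Q c b) * subQ Q (pderiv c P) := by
  induction P using MvPolynomial.induction_on with
  | C a => simp [subQ, pderiv_C]
  | add p q hp hq => simp only [map_add, hp, hq, mul_add, Finset.sum_add_distrib]
  | mul_X p i hp =>
    have hXd : ∀ c : σ, pderiv c (X i : MvPolynomial σ ℝ) = if c = i then 1 else 0 := by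
      intro c; by_cases h : c = i
      · subst h; simp
      · rw [pderiv_X_of_ne (Ne.symm h), if_neg h]
    have hR : ∀ c, subQ Q (pderiv c (p * X i))
        = subQ Q (pderiv c p) * subQ Q (X i) + (if c = i then subQ Q p else 0) := by
      intro c
      rw [pderiv_mul, map_add, _root_.map_mul, _root_.map_mul, hXd c]
      by_cases h : c = i <;> simp [h]
    rw [_root_.map_mul, pderiv_mul, hp]
    have hd : pderiv b (subQ Q (X i)) = C (Q i b) := by
      rw [subQ_X]; exact pderiv_lin Q i b
    rw [hd]
    simp only [hR, mul_add, Finset.sum_add_distrib, mul_ite, mul_zero,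
      Finset.sum_ite_eq', Finset.mem_univ, if_true]
    rw [Finset.sum_mul, mul_comm ((subQ Q) p) (C (Q i b))]
    simp only [mul_assoc]

lemma wick_monomial (hQ : ∀ a c, ∑ b, Q a b * Q c b = if a = c then 1 else 0) :
    ∀ (n : ℕ) (s : σ →₀ ℕ), (∑ a, s a) = n →
      gmom (subQ Q (monomial s 1)) = gmom (monomial s 1) := by
  intro n
  induction n using Nat.strong_induction_on with
  | _ n ih =>
    intro s hs
    rcases Nat.eq_zero_or_pos n with hn | hn
    · subst hn
      have : s = 0 := by
        ext a
        exact (Finset.sum_eq_zero_iff.mp hs) a (Finset.mem_univ a)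
      subst this
      rw [monomial_zero', C_1, _root_.map_one]
    · -- pick a with s a ≠ 0
      have hex : ∃ a, s a ≠ 0 := by
        by_contra h
        push_neg at h
        rw [Finset.sum_eq_zero (fun a _ => h a)] at hs
        omega
      obtain ⟨a, ha⟩ := hex
      set t : σ →₀ ℕ := s - Finsupp.single a 1 with ht
      have hst : s = Finsupp.single a 1 + t := by
        ext c
        by_cases h : c = a
        · subst h; simp [ht]; omega
        · simp [ht, Finsupp.single_apply, Ne.symm h, h]
      have hmono : monomial s (1 : ℝ) = X a * monomial t 1 := by
        rw [← pow_one (X a : MvPolynomial σ ℝ), X_pow_eq_monomial, monomial_mul, one_mul, ← hst]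
      -- the degree of t - single c 1 is < n for any c
      have hsum_t : ∑ b, t b = n - 1 := by
        have h1 : ∑ b, s b = ∑ b, ((Finsupp.single a 1 : σ →₀ ℕ) b + t b) := by
          refine Finset.sum_congr rfl fun b _ => ?_
          conv_lhs => rw [hst]
          simp
        have h2 : ∑ b, ((Finsupp.single a 1 : σ →₀ ℕ) b) = 1 := by
          simp [Finsupp.single_apply]
        rw [hs] at h1
        rw [Finset.sum_add_distrib, h2] at h1
        omega
      have hdeg : ∀ c : σ, (∑ b, (t - Finsupp.single c 1 : σ →₀ ℕ) b) < n := by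
        intro c
        have hle : ∑ b, (t - Finsupp.single c 1 : σ →₀ ℕ) b ≤ ∑ b, t b :=
          Finset.sum_le_sum fun b _ => by simp [Finsupp.tsub_apply]
        omega
      -- reduction on the plain side
      have hplain : gmom (monomial s (1 : ℝ))
          = -((t a : ℝ) * gmom (monomial (t - Finsupp.single a 1) 1)) := by
        rw [hmono, gmom_X_mul, pderiv_monomial, one_mul]
        have : (monomial (t - Finsupp.single a 1)) ((t a : ℝ))
            = ((t a : ℝ)) • (monomial (t - Finsupp.single a 1) (1:ℝ)) := by
          rw [smul_monomial, smul_eq_mul, mul_one]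
        rw [this, _root_.map_smul, smul_eq_mul]
      -- reduction on the substituted side
      have hsub : gmom (subQ Q (monomial s (1:ℝ)))
          = -((t a : ℝ) * gmom (subQ Q (monomial (t - Finsupp.single a 1) 1))) := by
        have e1 : ∀ b : σ, gmom ((C (Q a b) * X b) * subQ Q (monomial t 1))
            = Q a b * - gmom (pderiv b (subQ Q (monomial t 1))) := by
          intro b
          rw [mul_assoc, gmom_C_mul, gmom_X_mul]
        have e2 : ∀ b : σ, gmom (pderiv b (subQ Q (monomial t 1)))
            = ∑ c, Q c b * gmom (subQ Q (pderiv c (monomial t 1))) := by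
          intro b
          rw [pderiv_subQ, map_sum]
          exact Finset.sum_congr rfl fun c _ => gmom_C_mul _ _
        set G : σ → ℝ := fun c => gmom (subQ Q (pderiv c (monomial t 1))) with hG
        have e4 : ∀ b : σ, Q a b * - gmom (pderiv b (subQ Q (monomial t 1)))
            = -∑ c, Q a b * Q c b * G c := by
          intro b
          rw [e2 b, mul_neg, Finset.mul_sum]
          congr 1
          exact Finset.sum_congr rfl fun c _ => (mul_assoc _ _ _).symm
        have e5 : ∑ c, ∑ b, Q a b * Q c b * G c = G a := by
          have : ∀ c : σ, ∑ b, Q a b * Q c b * G c = (if a = c then 1 else 0) * G c := by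
            intro c
            rw [← Finset.sum_mul, hQ a c]
          rw [Finset.sum_congr rfl fun c _ => this c]
          simp
        have e6 : G a = (t a : ℝ) * gmom (subQ Q (monomial (t - Finsupp.single a 1) 1)) := by
          rw [hG]
          simp only [pderiv_monomial, one_mul]
          have hmm : (monomial (t - Finsupp.single a 1)) ((t a : ℝ))
              = ((t a : ℝ)) • (monomial (t - Finsupp.single a 1) (1:ℝ)) := by
            rw [smul_monomial, smul_eq_mul, mul_one]
          rw [hmm, _root_.map_smul, _root_.map_smul, smul_eq_mul]
        rw [hmono, _root_.map_mul, subQ_X, Finset.sum_mul, map_sum,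
          Finset.sum_congr rfl (fun b _ => e1 b),
          Finset.sum_congr rfl (fun b _ => e4 b)]
        rw [Finset.sum_neg_distrib, Finset.sum_comm, e5, e6]
      rw [hplain, hsub, ih _ (hdeg a) _ rfl]

lemma wick (hQ : ∀ a c, ∑ b, Q a b * Q c b = if a = c then 1 else 0) (P : MvPolynomial σ ℝ) :
    gmom (subQ Q P) = gmom P := by
  conv_lhs => rw [P.as_sum]
  conv_rhs => rw [P.as_sum]
  rw [map_sum, map_sum, map_sum]
  refine Finset.sum_congr rfl fun s _ => ?_
  have h1 : monomial s (coeff s P) = C (coeff s P) * monomial s 1 := by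
    rw [C_mul_monomial, mul_one]
  have h2 : subQ Q (C (coeff s P) * monomial s 1) = C (coeff s P) * subQ Q (monomial s 1) := by
    rw [_root_.map_mul]
    congr 1
    rw [show (C (coeff s P) : MvPolynomial σ ℝ) = algebraMap ℝ _ (coeff s P) from rfl]
    exact (subQ Q).commutes _
  rw [h1, h2, gmom_C_mul, gmom_C_mul, wick_monomial Q hQ _ s rfl]

end Subst

lemma mprod_add_disjoint {s t : σ →₀ ℕ} (h : Disjoint s.support t.support) :
    mprod (s + t) = mprod s * mprod t := by
  unfold mprod
  rw [← Finset.prod_mul_distrib]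
  refine Finset.prod_congr rfl fun a _ => ?_
  show μ ((s + t : σ →₀ ℕ) a) = μ (s a) * μ (t a)
  by_cases hs : s a = 0
  · simp [hs, μ]
  · have ht : t a = 0 := by
      by_contra ht
      exact Finset.disjoint_left.mp h (Finsupp.mem_support_iff.mpr hs)
        (Finsupp.mem_support_iff.mpr ht)
    simp [ht, μ]

lemma gmom_mul_disjoint {P P' : MvPolynomial σ ℝ} (h : Disjoint P.vars P'.vars) :
    gmom (P * P') = gmom P * gmom P' := by
  conv_lhs => rw [P.as_sum, P'.as_sum, Finset.sum_mul_sum]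
  conv_rhs => rw [P.as_sum, P'.as_sum, map_sum, map_sum, Finset.sum_mul_sum]
  rw [map_sum]
  refine Finset.sum_congr rfl fun s hs => ?_
  rw [map_sum]
  refine Finset.sum_congr rfl fun t ht => ?_
  have hst : Disjoint s.support t.support := by
    refine Finset.disjoint_left.mpr fun a has hat => ?_
    exact Finset.disjoint_left.mp h ((mem_vars a).mpr ⟨s, hs, has⟩) ((mem_vars a).mpr ⟨t, ht, hat⟩)
  rw [monomial_mul, gmom_monomial, gmom_monomial, gmom_monomial, mprod_add_disjoint hst]
  ring

lemma gmom_CX_pow (i : σ) (c : ℝ) : ∀ n, gmom (((C c + X i : MvPolynomial σ ℝ)) ^ n) = He n c := by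
  intro n
  induction n using Nat.twoStepInduction with
  | zero => rw [pow_zero, gmom_one]; simp [He]
  | one =>
    rw [pow_one, map_add]
    have h1 : gmom (C c : MvPolynomial σ ℝ) = c := by
      rw [← monomial_zero', gmom_monomial, mprod_zero, mul_one]
    have h2 : gmom (X i : MvPolynomial σ ℝ) = 0 := by
      rw [← pow_one (X i : MvPolynomial σ ℝ), X_pow_eq_monomial, gmom_monomial, mprod_single]
      simp [μ]
    rw [h1, h2]
    simp [He]
  | more n ih2 ih1 =>
    have hpd : pderiv i ((C c + X i : MvPolynomial σ ℝ)) = 1 := by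
      rw [map_add, pderiv_C, pderiv_X_self, zero_add]
    have hpow : ((C c + X i : MvPolynomial σ ℝ)) ^ (n + 2)
        = (C c + X i) ^ (n + 1) * C c + X i * (C c + X i) ^ (n + 1) := by
      rw [pow_succ, mul_add, mul_comm ((C c + X i : MvPolynomial σ ℝ) ^ (n+1)) (X i)]
    rw [hpow, map_add, mul_comm, gmom_C_mul, gmom_X_mul, pderiv_pow, hpd, mul_one, ih1]
    have hnc : ((n + 1 : ℕ) : MvPolynomial σ ℝ) * (C c + X i) ^ (n + 1 - 1)
        = C ((n + 1 : ℕ) : ℝ) * (C c + X i) ^ n := by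
      simp
    rw [hnc, gmom_C_mul, ih2]
    show c * He (n+1) c - ((n+1 : ℕ) : ℝ) * He n c = He (n+2) c
    rw [show He (n+2) c = c * He (n + 1) c - ((n : ℝ) + 1) * He n c from rfl]
    push_cast
    ring

section Pairs
variable {d : ℕ}

/-- The basic factor `(x_a + Z_a)(y_a + W_a)`. -/
noncomputable def Fp (x y : Fin d → ℝ) (a : Fin d) : MvPolynomial (Fin d ⊕ Fin d) ℝ :=
  (C (x a) + X (Sum.inl a)) * (C (y a) + X (Sum.inr a))

lemma vars_CX (c : ℝ) {σ : Type*} [DecidableEq σ] (i : σ) :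
    ((C c + X i : MvPolynomial σ ℝ)).vars ⊆ {i} := by
  refine (vars_add_subset _ _).trans ?_
  rw [vars_C, vars_X]
  simp

lemma vars_Fp_pow (x y : Fin d → ℝ) (a : Fin d) (n : ℕ) :
    ((Fp x y a) ^ n).vars ⊆ {Sum.inl a, Sum.inr a} := by
  refine (vars_pow _ _).trans ?_
  refine (vars_mul _ _).trans ?_
  intro v hv
  rcases Finset.mem_union.mp hv with h | h
  · have := vars_CX (x a) (Sum.inl a) h
    simp only [Finset.mem_singleton] at this
    simp [this]
  · have := vars_CX (y a) (Sum.inr a) h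
    simp only [Finset.mem_singleton] at this
    simp [this]

lemma gmom_Fp_pow (x y : Fin d → ℝ) (a : Fin d) (n : ℕ) :
    gmom ((Fp x y a) ^ n) = He n (x a) * He n (y a) := by
  rw [Fp, mul_pow, gmom_mul_disjoint, gmom_CX_pow, gmom_CX_pow]
  refine Finset.disjoint_left.mpr fun v hv hv' => ?_
  have h1 := (vars_pow _ _).trans (vars_CX (x a) (Sum.inl a)) hv
  have h2 := (vars_pow _ _).trans (vars_CX (y a) (Sum.inr a)) hv'
  simp only [Finset.mem_singleton] at h1 h2
  rw [h1] at h2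
  exact Sum.inl_ne_inr h2

lemma gmom_prod_Fp (x y : Fin d → ℝ) (α : Fin d → ℕ) :
    gmom (∏ a, (Fp x y a) ^ (α a)) = ∏ a, He (α a) (x a) * He (α a) (y a) := by
  have main : ∀ s : Finset (Fin d), gmom (∏ a ∈ s, (Fp x y a) ^ (α a))
      = ∏ a ∈ s, He (α a) (x a) * He (α a) (y a) := by
    intro s
    induction s using Finset.induction_on with
    | empty => simpa using gmom_one
    | insert a s ha ih =>
      rw [Finset.prod_insert ha, Finset.prod_insert ha, gmom_mul_disjoint, gmom_Fp_pow, ih]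
      refine Finset.disjoint_left.mpr fun v hv hv' => ?_
      have h1 := vars_Fp_pow x y a (α a) hv
      have h2 := vars_prod (s := s) (fun b => (Fp x y b) ^ (α b)) hv'
      rcases Finset.mem_biUnion.mp h2 with ⟨b, hb, hvb⟩
      have h3 := vars_Fp_pow x y b (α b) hvb
      simp only [Finset.mem_insert, Finset.mem_singleton] at h1 h3
      have hab : a = b := by
        rcases h1 with rfl | rfl <;> rcases h3 with h3 | h3 <;> simp_all
      exact ha (hab ▸ hb)
  exact main Finset.univ

lemma gmom_key (k : ℕ) (x y : Fin d → ℝ) :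
    gmom ((∑ a, Fp x y a) ^ k)
      = (k.factorial : ℝ) * ∑ α ∈ Finset.piAntidiag Finset.univ k, Hmul α x * Hmul α y := by
  rw [Finset.sum_pow_eq_sum_piAntidiag, map_sum, Finset.mul_sum]
  refine Finset.sum_congr rfl fun α hα => ?_
  obtain ⟨hsum, -⟩ := Finset.mem_piAntidiag.mp hα
  have h1 : ((Nat.multinomial Finset.univ α : ℕ) : MvPolynomial (Fin d ⊕ Fin d) ℝ)
        * ∏ a, Fp x y a ^ α a
      = C ((Nat.multinomial Finset.univ α : ℕ) : ℝ) * ∏ a, Fp x y a ^ α a := by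
    norm_cast
  rw [h1, gmom_C_mul, gmom_prod_Fp]
  have h2 : (Hmul α x * Hmul α y) * ∏ a, ((α a).factorial : ℝ)
      = ∏ a, He (α a) (x a) * He (α a) (y a) := by
    rw [Hmul, Hmul, ← Finset.prod_mul_distrib, ← Finset.prod_mul_distrib]
    refine Finset.prod_congr rfl fun a _ => ?_
    rw [hpoly, hpoly]
    have hpos : (0:ℝ) < ((α a).factorial : ℝ) := by
      exact_mod_cast Nat.factorial_pos _
    rw [div_mul_div_comm, div_mul_eq_mul_div, Real.mul_self_sqrt (le_of_lt hpos)]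
    field_simp
  have h3 : (Nat.multinomial Finset.univ α : ℝ) * ∏ a, ((α a).factorial : ℝ)
      = (k.factorial : ℝ) := by
    rw [← Nat.cast_prod, ← Nat.cast_mul, mul_comm, Nat.multinomial_spec, hsum]
  calc (Nat.multinomial Finset.univ α : ℝ) * ∏ a, He (α a) (x a) * He (α a) (y a)
      = (Nat.multinomial Finset.univ α : ℝ)
          * ((Hmul α x * Hmul α y) * ∏ a, ((α a).factorial : ℝ)) := by rw [h2]
    _ = ((Nat.multinomial Finset.univ α : ℝ) * ∏ a, ((α a).factorial : ℝ))
          * (Hmul α x * Hmul α y) := by ring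
    _ = (k.factorial : ℝ) * (Hmul α x * Hmul α y) := by rw [h3]

end Pairs

section Main
variable {d : ℕ}

/-- Block-diagonal matrix acting on both Gaussian copies. -/
noncomputable def Qblk (R : Matrix (Fin d) (Fin d) ℝ) : (Fin d ⊕ Fin d) → (Fin d ⊕ Fin d) → ℝ
  | Sum.inl a, Sum.inl b => R a b
  | Sum.inr a, Sum.inr b => R a b
  | _, _ => 0

lemma Qblk_rows (R : Matrix (Fin d) (Fin d) ℝ) (hR : Rᵀ * R = 1) :
    ∀ a c, ∑ b, Qblk R a b * Qblk R c b = if a = c then 1 else 0 := by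
  have hRRT : R * Rᵀ = 1 := mul_eq_one_comm.mp hR
  have key : ∀ a c : Fin d, ∑ b, R a b * R c b = if a = c then 1 else 0 := by
    intro a c
    calc ∑ b, R a b * R c b = (R * Rᵀ) a c := by
          rw [Matrix.mul_apply]
          simp [Matrix.transpose_apply]
      _ = (1 : Matrix (Fin d) (Fin d) ℝ) a c := by rw [hRRT]
      _ = if a = c then 1 else 0 := Matrix.one_apply
  intro a c
  cases a <;> cases c <;>
    simp [Qblk, Fintype.sum_sum_type, key, Matrix.one_apply]

lemma key_TT (R : Matrix (Fin d) (Fin d) ℝ) (hR : Rᵀ * R = 1) (b c : Fin d) :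
    ∑ a, R a b * R a c = if b = c then 1 else 0 := by
  calc ∑ a, R a b * R a c = (Rᵀ * R) b c := by
        rw [Matrix.mul_apply]
        simp [Matrix.transpose_apply]
    _ = (1 : Matrix (Fin d) (Fin d) ℝ) b c := by rw [hR]
    _ = if b = c then 1 else 0 := Matrix.one_apply

lemma mulVec_apply' (R : Matrix (Fin d) (Fin d) ℝ) (x : Fin d → ℝ) (a : Fin d) :
    R.mulVec x a = ∑ b, R a b * x b := rfl

lemma subQ_CXl (R : Matrix (Fin d) (Fin d) ℝ) (x : Fin d → ℝ) (a : Fin d) :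
    subQ (Qblk R) (C ((R.mulVec x) a) + X (Sum.inl a))
      = ∑ b, C (R a b) * (C (x b) + X (Sum.inl b)) := by
  rw [map_add, subQ_X]
  rw [show subQ (Qblk R) (C ((R.mulVec x) a)) = C ((R.mulVec x) a) by
    rw [← algebraMap_eq]; exact (subQ _).commutes _]
  rw [Fintype.sum_sum_type]
  have hz : (∑ b : Fin d, C (Qblk R (Sum.inl a) (Sum.inr b)) * X (Sum.inr b)
      : MvPolynomial (Fin d ⊕ Fin d) ℝ) = 0 := by
    simp [Qblk]
  rw [hz, add_zero]
  have hq : ∀ b : Fin d, Qblk R (Sum.inl a) (Sum.inl b) = R a b := fun b => rfl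
  simp only [hq]
  rw [mulVec_apply', map_sum, ← Finset.sum_add_distrib]
  refine Finset.sum_congr rfl fun b _ => ?_
  rw [mul_add, C_mul]

lemma subQ_CXr (R : Matrix (Fin d) (Fin d) ℝ) (y : Fin d → ℝ) (a : Fin d) :
    subQ (Qblk R) (C ((R.mulVec y) a) + X (Sum.inr a))
      = ∑ b, C (R a b) * (C (y b) + X (Sum.inr b)) := by
  rw [map_add, subQ_X]
  rw [show subQ (Qblk R) (C ((R.mulVec y) a)) = C ((R.mulVec y) a) by
    rw [← algebraMap_eq]; exact (subQ _).commutes _]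
  rw [Fintype.sum_sum_type]
  have hz : (∑ b : Fin d, C (Qblk R (Sum.inr a) (Sum.inl b)) * X (Sum.inl b)
      : MvPolynomial (Fin d ⊕ Fin d) ℝ) = 0 := by
    simp [Qblk]
  rw [hz, zero_add]
  have hq : ∀ b : Fin d, Qblk R (Sum.inr a) (Sum.inr b) = R a b := fun b => rfl
  simp only [hq]
  rw [mulVec_apply', map_sum, ← Finset.sum_add_distrib]
  refine Finset.sum_congr rfl fun b _ => ?_
  rw [mul_add, C_mul]

lemma subQ_inner (R : Matrix (Fin d) (Fin d) ℝ) (hR : Rᵀ * R = 1) (x y : Fin d → ℝ) :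
    subQ (Qblk R) (∑ a, Fp (R.mulVec x) (R.mulVec y) a) = ∑ a, Fp x y a := by
  rw [map_sum]
  have h1 : ∀ a, subQ (Qblk R) (Fp (R.mulVec x) (R.mulVec y) a)
      = (∑ b, C (R a b) * (C (x b) + X (Sum.inl b)))
        * (∑ c, C (R a c) * (C (y c) + X (Sum.inr c))) := by
    intro a
    rw [Fp, _root_.map_mul, subQ_CXl, subQ_CXr]
  rw [Finset.sum_congr rfl fun a _ => h1 a]
  have h2 : ∀ a, (∑ b, C (R a b) * (C (x b) + X (Sum.inl b)))
        * (∑ c, C (R a c) * (C (y c) + X (Sum.inr c)))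
      = ∑ b, ∑ c, C (R a b * R a c)
          * ((C (x b) + X (Sum.inl b)) * (C (y c) + X (Sum.inr c))) := by
    intro a
    rw [Finset.sum_mul_sum]
    refine Finset.sum_congr rfl fun b _ => Finset.sum_congr rfl fun c _ => ?_
    rw [C_mul]
    ring
  rw [Finset.sum_congr rfl fun a _ => h2 a, Finset.sum_comm]
  have h3 : ∀ b : Fin d, ∑ a, ∑ c, C (R a b * R a c)
        * ((C (x b) + X (Sum.inl b)) * (C (y c) + X (Sum.inr c)))
      = ∑ c, (C (if b = c then (1:ℝ) else 0))
          * ((C (x b) + X (Sum.inl b)) * (C (y c) + X (Sum.inr c))) := by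
    intro b
    rw [Finset.sum_comm]
    refine Finset.sum_congr rfl fun c _ => ?_
    rw [← Finset.sum_mul, ← map_sum, key_TT R hR]
  rw [Finset.sum_congr rfl fun b _ => h3 b]
  refine Finset.sum_congr rfl fun b _ => ?_
  have h4 : ∀ c : Fin d, (C (if b = c then (1:ℝ) else 0))
        * ((C (x b) + X (Sum.inl b)) * (C (y c) + X (Sum.inr c)))
      = if b = c then ((C (x b) + X (Sum.inl b)) * (C (y c) + X (Sum.inr c))) else 0 := by
    intro c
    by_cases h : b = c <;> simp [h]
  rw [Finset.sum_congr rfl fun c _ => h4 c, Finset.sum_ite_eq]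
  simp [Fp]

end Main
end HermiteRot


open HermiteRot

/-- Rotation invariance of the degree-`k` Hermite kernel:
`∑_{|α|=k} H_α(x)H_α(x') = ∑_{|α|=k} H_α(Rx)H_α(Rx')` for orthogonal `R`. -/
theorem hermite_kernel_rotation_invariant (d k : ℕ) (x x' : Fin d → ℝ)
    (R : Matrix (Fin d) (Fin d) ℝ) (hR : Rᵀ * R = 1) :
    ∑' α : {α : Fin d → ℕ // ∑ a, α a = k}, Hmul α.1 x * Hmul α.1 x'
      = ∑' α : {α : Fin d → ℕ // ∑ a, α a = k},
          Hmul α.1 (R.mulVec x) * Hmul α.1 (R.mulVec x') := by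
  classical
  have hset : ∀ u v : Fin d → ℝ,
      ∑' α : {α : Fin d → ℕ // ∑ a, α a = k}, Hmul α.1 u * Hmul α.1 v
        = ∑ α ∈ Finset.piAntidiag Finset.univ k, Hmul α u * Hmul α v := by
    intro u v
    let e : {α : Fin d → ℕ // ∑ a, α a = k}
        ≃ {α : Fin d → ℕ // α ∈ Finset.piAntidiag Finset.univ k} :=
      { toFun := fun α => ⟨α.1, by simp [Finset.mem_piAntidiag, α.2]⟩
        invFun := fun α => ⟨α.1, (Finset.mem_piAntidiag.mp α.2).1⟩
        left_inv := fun α => rfl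
        right_inv := fun α => rfl }
    rw [← Finset.tsum_subtype (Finset.piAntidiag Finset.univ k) (fun α => Hmul α u * Hmul α v)]
    refine Eq.trans ?_ (e.tsum_eq fun β => Hmul β.1 u * Hmul β.1 v)
    exact tsum_congr fun α => rfl
  rw [hset, hset]
  have hk : (k.factorial : ℝ) ≠ 0 := by exact_mod_cast k.factorial_ne_zero
  apply mul_left_cancel₀ hk
  rw [← gmom_key k x x', ← gmom_key k (R.mulVec x) (R.mulVec x')]
  conv_lhs => rw [← subQ_inner R hR x x', ← map_pow]
  exact wick (Qblk R) (Qblk_rows R hR) _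
end

section
/- For every nonnegative integer k and any x, x' ∈ ℝ^d, the degree-k Hermite kernel has the closed form ∑_{|α|=k} H_α(x)H_α(x') = (1/k!) · E[(x^⊤x' − Y^⊤Y' + i(x^⊤Y' + Y^⊤x'))^k], where Y, Y' are independent standard Gaussian vectors in ℝ^d. -/
open MeasureTheory ProbabilityTheory

/-- Standard Gaussian measure `N(0, I_d)` on `ℝ^d`. -/
noncomputable def gmeas (d : ℕ) : Measure (Fin d → ℝ) :=
  Measure.pi fun _ => gaussianReal 0 1

open scoped ENNReal NNReal

noncomputable section

/-- master integrability: polynomial growth times gaussian weight. -/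
lemma integrable_pow_gauss (n : ℕ) : Integrable (fun z : ℝ => |z| ^ n * Real.exp (-z ^ 2 / 2)) := by
  have h : Integrable (fun z : ℝ => z ^ (n : ℝ) * Real.exp (-(1/2 : ℝ) * z ^ 2)) :=
    integrable_rpow_mul_exp_neg_mul_sq (by norm_num) (lt_of_lt_of_le neg_one_lt_zero (Nat.cast_nonneg n))
  have h2 := h.abs
  refine h2.congr ?_
  filter_upwards with z
  rw [abs_mul, abs_of_pos (Real.exp_pos _), Real.rpow_natCast, _root_.abs_pow]
  ring_nf

lemma key_int {P : ℝ → ℂ} (hP : Continuous P) (C : ℝ) (m : ℕ)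
    (hB : ∀ z, ‖P z‖ ≤ C * (1 + |z|) ^ m) :
    Integrable (fun z : ℝ => P z * Real.exp (-z ^ 2 / 2)) := by
  have hbound : Integrable (fun z : ℝ => C * ((1 + |z|) ^ m * Real.exp (-z ^ 2 / 2))) := by
    have : Integrable (fun z : ℝ => (1 + |z|) ^ m * Real.exp (-z ^ 2 / 2)) := by
      have : Integrable (fun z : ℝ =>
          ∑ j ∈ Finset.range (m + 1), (m.choose j : ℝ) * (|z| ^ j * Real.exp (-z ^ 2 / 2))) := by
        apply MeasureTheory.integrable_finset_sum
        intro j _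
        exact (integrable_pow_gauss j).const_mul _
      refine this.congr ?_
      filter_upwards with z
      rw [show ((1:ℝ) + |z|) = |z| + 1 from add_comm _ _, add_pow, Finset.sum_mul]
      refine Finset.sum_congr rfl fun j _ => ?_
      simp only [one_pow]
      ring
    exact this.const_mul C
  refine hbound.mono' ?_ ?_
  · exact (hP.mul (Complex.continuous_ofReal.comp
      (Real.continuous_exp.comp (by fun_prop)))).aestronglyMeasurable
  · filter_upwards with z
    rw [norm_mul]
    have h1 : ‖(Real.exp (-z ^ 2 / 2) : ℂ)‖ = Real.exp (-z ^ 2 / 2) := by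
      rw [Complex.norm_real, Real.norm_eq_abs, abs_of_pos (Real.exp_pos _)]
    rw [h1, ← mul_assoc]
    exact mul_le_mul_of_nonneg_right (hB z) (Real.exp_pos _).le

/-- Integrability of `(x+iz)^m e^{-z²/2}`. -/
lemma int1 (x : ℝ) (m : ℕ) :
    Integrable (fun z : ℝ => ((x : ℂ) + Complex.I * z) ^ m * Real.exp (-z ^ 2 / 2)) := by
  apply key_int (by fun_prop) ((1 + |x|) ^ m) m
  intro z
  rw [norm_pow]
  calc ‖(x : ℂ) + Complex.I * z‖ ^ m ≤ (|x| + |z|) ^ m := by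
        apply pow_le_pow_left₀ (norm_nonneg _)
        refine (norm_add_le _ _).trans ?_
        simp [Complex.norm_real]
      _ ≤ ((1 + |x|) * (1 + |z|)) ^ m := by
        apply pow_le_pow_left₀ (by positivity)
        nlinarith [abs_nonneg x, abs_nonneg z]
      _ = (1 + |x|) ^ m * (1 + |z|) ^ m := mul_pow _ _ _

/-- Integrability of `z(x+iz)^m e^{-z²/2}`. -/
lemma int2 (x : ℝ) (m : ℕ) :
    Integrable (fun z : ℝ => (z : ℂ) * ((x : ℂ) + Complex.I * z) ^ m * Real.exp (-z ^ 2 / 2)) := by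
  apply key_int (by fun_prop) ((1 + |x|) ^ m) (m + 1)
  intro z
  rw [norm_mul, norm_pow, Complex.norm_real, Real.norm_eq_abs]
  calc |z| * ‖(x : ℂ) + Complex.I * z‖ ^ m ≤ (1 + |z|) * ((1 + |x|) * (1 + |z|)) ^ m := by
        apply mul_le_mul (by nlinarith [abs_nonneg z]) ?_ (by positivity) (by positivity)
        apply pow_le_pow_left₀ (norm_nonneg _)
        refine (norm_add_le _ _).trans ?_
        simp [Complex.norm_real]
        nlinarith [abs_nonneg x, abs_nonneg z]
      _ = (1 + |x|) ^ m * (1 + |z|) ^ (m + 1) := by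
        rw [mul_pow]; ring
  
/-- Stein / integration by parts for the Gaussian weight. -/
lemma stein (n : ℕ) (x : ℝ) :
    ∫ z : ℝ, (z : ℂ) * ((x : ℂ) + Complex.I * z) ^ n * Real.exp (-z ^ 2 / 2)
      = (n : ℂ) * Complex.I *
        ∫ z : ℝ, ((x : ℂ) + Complex.I * z) ^ (n - 1) * Real.exp (-z ^ 2 / 2) := by
  set I := Complex.I
  have hderiv : ∀ z : ℝ, HasDerivAt
      (fun z : ℝ => ((x : ℂ) + I * z) ^ n * (Real.exp (-z ^ 2 / 2) : ℂ))
      ((n : ℂ) * I * (((x : ℂ) + I * z) ^ (n - 1) * Real.exp (-z ^ 2 / 2))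
        - (z : ℂ) * ((x : ℂ) + I * z) ^ n * Real.exp (-z ^ 2 / 2)) z := by
    intro z
    have hc : HasDerivAt (fun w : ℂ => ((x : ℂ) + I * w) ^ n)
        ((n : ℂ) * ((x : ℂ) + I * (z : ℂ)) ^ (n - 1) * I) (z : ℂ) := by
      have := (((hasDerivAt_id (z : ℂ)).const_mul I).const_add (x : ℂ)).pow n
      simpa [mul_one, Pi.pow_def] using this
    have h2 := hc.comp_ofReal
    have h3 : HasDerivAt (fun z : ℝ => Real.exp (-z ^ 2 / 2)) (-z * Real.exp (-z ^ 2 / 2)) z := by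
      have := ((hasDerivAt_pow 2 z).neg.div_const 2).exp
      convert this using 1
      simp only [Pi.neg_apply]
      simp
      ring
    have h4 := h3.ofReal_comp
    have := h2.fun_mul h4
    refine this.congr_deriv ?_
    push_cast
    ring
  have hint : Integrable (fun z : ℝ =>
      (n : ℂ) * I * (((x : ℂ) + I * z) ^ (n - 1) * Real.exp (-z ^ 2 / 2))
        - (z : ℂ) * ((x : ℂ) + I * z) ^ n * Real.exp (-z ^ 2 / 2)) := by
    exact ((int1 x (n - 1)).const_mul _).sub (int2 x n)
  have hzero := integral_eq_zero_of_hasDerivAt_of_integrable hderiv hint (int1 x n)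
  rw [integral_sub ((int1 x (n - 1)).const_mul _) (int2 x n), integral_const_mul] at hzero
  linear_combination -hzero

lemma Jzero (x : ℝ) :
    ∫ z : ℝ, ((x : ℂ) + Complex.I * z) ^ 0 * Real.exp (-z ^ 2 / 2)
      = (Real.sqrt (2 * Real.pi) : ℂ) := by
  simp only [pow_zero, one_mul]
  have hre : ∫ z : ℝ, ((Real.exp (-z ^ 2 / 2) : ℝ) : ℂ)
      = ((∫ z : ℝ, Real.exp (-z ^ 2 / 2) : ℝ) : ℂ) := integral_ofReal
  rw [hre]
  norm_cast
  have : (fun z : ℝ => Real.exp (-z ^ 2 / 2)) = fun z : ℝ => Real.exp (-(1/2 : ℝ) * z ^ 2) := by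
    funext z; ring_nf
  rw [this, integral_gaussian]
  congr 1
  rw [eq_comm]
  field_simp

lemma Jform (n : ℕ) (x : ℝ) :
    ∫ z : ℝ, ((x : ℂ) + Complex.I * z) ^ n * Real.exp (-z ^ 2 / 2)
      = (He n x : ℂ) * (Real.sqrt (2 * Real.pi) : ℂ) := by
  induction n using Nat.twoStepInduction generalizing x with
  | zero =>
    rw [Jzero]
    simp [He]
  | one =>
    have hsplit : (fun z : ℝ => ((x : ℂ) + Complex.I * z) ^ 1 * Real.exp (-z ^ 2 / 2))
        = fun z : ℝ => (x : ℂ) * (((x : ℂ) + Complex.I * z) ^ 0 * Real.exp (-z ^ 2 / 2))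
          + Complex.I * ((z : ℂ) * ((x : ℂ) + Complex.I * z) ^ 0 * Real.exp (-z ^ 2 / 2)) := by
      funext z; ring
    rw [hsplit, MeasureTheory.integral_add (((int1 x 0).const_mul _))
      ((int2 x 0).const_mul _), integral_const_mul, integral_const_mul, stein 0 x, Jzero]
    simp [He]
  | more n ih ih1 =>
    have hsplit : (fun z : ℝ => ((x : ℂ) + Complex.I * z) ^ (n + 2) * Real.exp (-z ^ 2 / 2))
        = fun z : ℝ => (x : ℂ) * (((x : ℂ) + Complex.I * z) ^ (n + 1) * Real.exp (-z ^ 2 / 2))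
          + Complex.I * ((z : ℂ) * ((x : ℂ) + Complex.I * z) ^ (n + 1) * Real.exp (-z ^ 2 / 2)) := by
      funext z; ring
    rw [hsplit, MeasureTheory.integral_add (((int1 x (n+1)).const_mul _))
      ((int2 x (n+1)).const_mul _), integral_const_mul, integral_const_mul, stein (n+1) x]
    simp only [Nat.add_sub_cancel, ih, ih1]
    have hHe : He (n + 2) x = x * He (n + 1) x - (n + 1) * He n x := rfl
    rw [hHe]
    push_cast
    ring_nf
    rw [Complex.I_sq]
    ring

lemma pdf01 (z : ℝ) :
    gaussianPDFReal 0 1 z = (Real.sqrt (2 * Real.pi))⁻¹ * Real.exp (-z ^ 2 / 2) := by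
  simp [gaussianPDFReal]

lemma gauss_conv (f : ℝ → ℂ) :
    ∫ z, f z ∂(gaussianReal 0 1) = ∫ z : ℝ, gaussianPDFReal 0 1 z • f z := by
  rw [gaussianReal_of_var_ne_zero 0 one_ne_zero]
  have hmeas : Measurable fun z : ℝ => (gaussianPDFReal 0 1 z).toNNReal :=
    (measurable_gaussianPDFReal 0 1).real_toNNReal
  rw [show gaussianPDF 0 1
      = fun z => ((fun z : ℝ => (gaussianPDFReal 0 1 z).toNNReal) z : ℝ≥0∞) from rfl]
  rw [integral_withDensity_eq_integral_smul hmeas]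
  congr 1
  funext z
  rw [NNReal.smul_def, Real.coe_toNNReal _ (gaussianPDFReal_nonneg 0 1 z)]

lemma gauss_smul_eq (n : ℕ) (x : ℝ) :
    (fun z : ℝ => gaussianPDFReal 0 1 z • ((x : ℂ) + Complex.I * z) ^ n)
      = fun z : ℝ => (((Real.sqrt (2 * Real.pi))⁻¹ : ℝ) : ℂ)
          * (((x : ℂ) + Complex.I * z) ^ n * Real.exp (-z ^ 2 / 2)) := by
  funext z
  rw [pdf01, Complex.real_smul]
  push_cast
  ring

lemma hermite_gauss (n : ℕ) (x : ℝ) :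
    ∫ z : ℝ, ((x : ℂ) + Complex.I * z) ^ n ∂(gaussianReal 0 1) = (He n x : ℂ) := by
  rw [gauss_conv, gauss_smul_eq, integral_const_mul, Jform]
  have h : ((Real.sqrt (2 * Real.pi) : ℝ) : ℂ) ≠ 0 := by
    have : (0 : ℝ) < Real.sqrt (2 * Real.pi) := Real.sqrt_pos.2 (by positivity)
    exact_mod_cast this.ne'
  push_cast
  rw [inv_mul_eq_iff_eq_mul₀ h]
  ring

lemma hermite_integrable (n : ℕ) (x : ℝ) :
    Integrable (fun z : ℝ => ((x : ℂ) + Complex.I * z) ^ n) (gaussianReal 0 1) := by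
  rw [gaussianReal_of_var_ne_zero 0 one_ne_zero]
  have hmeas : Measurable fun z : ℝ => (gaussianPDFReal 0 1 z).toNNReal :=
    (measurable_gaussianPDFReal 0 1).real_toNNReal
  rw [show gaussianPDF 0 1
      = fun z => ((fun z : ℝ => (gaussianPDFReal 0 1 z).toNNReal) z : ℝ≥0∞) from rfl]
  rw [integrable_withDensity_iff_integrable_smul hmeas]
  have h := (int1 x n).const_mul ((((Real.sqrt (2 * Real.pi))⁻¹ : ℝ)) : ℂ)
  refine h.congr ?_
  filter_upwards with z
  have h2 := congrFun (gauss_smul_eq n x) z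
  rw [NNReal.smul_def, Real.coe_toNNReal _ (gaussianPDFReal_nonneg 0 1 z)]
  exact h2.symm

lemma gmeas_prod_integral {d : ℕ} (f : Fin d → ℝ → ℂ) :
    ∫ y, ∏ a, f a (y a) ∂(gmeas d) = ∏ a, ∫ z, f a z ∂(gaussianReal 0 1) := by
  letI : MeasureSpace ℝ := ⟨gaussianReal 0 1⟩
  haveI : SigmaFinite (volume : Measure ℝ) := inferInstanceAs (SigmaFinite (gaussianReal 0 1))
  exact MeasureTheory.integral_fintype_prod_eq_prod (fun a => f a)

lemma gmeas_prod_integrable {d : ℕ} (f : Fin d → ℝ → ℂ)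
    (hf : ∀ a, Integrable (f a) (gaussianReal 0 1)) :
    Integrable (fun y : Fin d → ℝ => ∏ a, f a (y a)) (gmeas d) := by
  letI : MeasureSpace ℝ := ⟨gaussianReal 0 1⟩
  haveI : SigmaFinite (volume : Measure ℝ) := inferInstanceAs (SigmaFinite (gaussianReal 0 1))
  exact Integrable.fintype_prod hf

lemma expand_eq {d : ℕ} (x x' : Fin d → ℝ) (y y' : Fin d → ℝ) :
    ((∑ a, x a * x' a : ℝ) : ℂ) - ((∑ a, y a * y' a : ℝ) : ℂ)
      + Complex.I * (((∑ a, x a * y' a : ℝ) : ℂ) + ((∑ a, y a * x' a : ℝ) : ℂ))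
    = ∑ a, ((x a : ℂ) + Complex.I * y a) * ((x' a : ℂ) + Complex.I * y' a) := by
  have h : ∀ a : Fin d, ((x a : ℂ) + Complex.I * y a) * ((x' a : ℂ) + Complex.I * y' a)
      = ((x a * x' a : ℝ) : ℂ) - ((y a * y' a : ℝ) : ℂ)
        + Complex.I * (((x a * y' a : ℝ) : ℂ) + ((y a * x' a : ℝ) : ℂ)) := by
    intro a
    push_cast
    linear_combination (y a * y' a : ℂ) * Complex.I_sq
  rw [Finset.sum_congr rfl (fun a _ => h a)]
  push_cast
  rw [Finset.sum_add_distrib, Finset.sum_sub_distrib, ← Finset.mul_sum, Finset.sum_add_distrib]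

lemma term_eq {d : ℕ} (k : ℕ) (x x' : Fin d → ℝ) (α : Fin d → ℕ) (hα : ∑ a, α a = k) :
    Hmul α x * Hmul α x'
      = (Nat.multinomial Finset.univ α : ℝ) / (Nat.factorial k : ℝ)
        * ((∏ a, He (α a) (x' a)) * ∏ a, He (α a) (x a)) := by
  have hspec := Nat.multinomial_spec (Finset.univ : Finset (Fin d)) α
  rw [hα] at hspec
  have hfac : (∏ a, ((α a).factorial : ℝ)) ≠ 0 :=
    Finset.prod_ne_zero_iff.2 fun a _ => Nat.cast_ne_zero.2 (Nat.factorial_ne_zero _)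
  have hk : ((Nat.factorial k : ℝ)) ≠ 0 := Nat.cast_ne_zero.2 (Nat.factorial_ne_zero _)
  have hLHS : Hmul α x * Hmul α x'
      = (∏ a, He (α a) (x a) * He (α a) (x' a)) / ∏ a, ((α a).factorial : ℝ) := by
    unfold Hmul hpoly
    rw [← Finset.prod_mul_distrib, ← Finset.prod_div_distrib]
    refine Finset.prod_congr rfl fun a _ => ?_
    rw [div_mul_div_comm, Real.mul_self_sqrt (Nat.cast_nonneg _)]
  rw [hLHS]
  have hcast : (Nat.multinomial Finset.univ α : ℝ) * ∏ a, ((α a).factorial : ℝ)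
      = (Nat.factorial k : ℝ) := by
    rw [← Nat.cast_prod, ← Nat.cast_mul, mul_comm, hspec]
  rw [Finset.prod_mul_distrib]
  field_simp
  linear_combination (-(∏ a, He (α a) (x a)) * ∏ a, He (α a) (x' a)) * hcast

lemma inner_int {d : ℕ} (k : ℕ) (x x' : Fin d → ℝ) (y : Fin d → ℝ) :
    ∫ y' : Fin d → ℝ,
        (∑ a, ((x a : ℂ) + Complex.I * y a) * ((x' a : ℂ) + Complex.I * y' a)) ^ k ∂(gmeas d)
      = ∑ α ∈ Finset.piAntidiag Finset.univ k,
          ((Nat.multinomial Finset.univ α : ℂ) * ∏ a, ((x a : ℂ) + Complex.I * y a) ^ (α a))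
            * ∏ a, ((He (α a) (x' a) : ℝ) : ℂ) := by
  have h1 : (fun y' : Fin d → ℝ =>
        (∑ a, ((x a : ℂ) + Complex.I * y a) * ((x' a : ℂ) + Complex.I * y' a)) ^ k)
      = fun y' : Fin d → ℝ => ∑ α ∈ Finset.piAntidiag Finset.univ k,
          ((Nat.multinomial Finset.univ α : ℂ) * ∏ a, ((x a : ℂ) + Complex.I * y a) ^ (α a))
            * ∏ a, ((x' a : ℂ) + Complex.I * (y' a)) ^ (α a) := by
    funext y'
    rw [Finset.sum_pow_eq_sum_piAntidiag]
    refine Finset.sum_congr rfl fun α _ => ?_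
    simp_rw [mul_pow]
    rw [Finset.prod_mul_distrib, mul_assoc]
  rw [h1, integral_finset_sum]
  · refine Finset.sum_congr rfl fun α _ => ?_
    rw [integral_const_mul]
    have h2 : ∫ y' : Fin d → ℝ, ∏ a, ((x' a : ℂ) + Complex.I * (y' a)) ^ (α a) ∂(gmeas d)
        = ∏ a, ∫ z : ℝ, ((x' a : ℂ) + Complex.I * z) ^ (α a) ∂(gaussianReal 0 1) :=
      gmeas_prod_integral (fun a z => ((x' a : ℂ) + Complex.I * z) ^ (α a))
    rw [h2]
    congr 1
    exact Finset.prod_congr rfl fun a _ => hermite_gauss (α a) (x' a)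
  · intro α _
    have h3 : Integrable (fun y' : Fin d → ℝ =>
        ∏ a, ((x' a : ℂ) + Complex.I * (y' a)) ^ (α a)) (gmeas d) :=
      gmeas_prod_integrable (fun a z => ((x' a : ℂ) + Complex.I * z) ^ (α a))
        (fun a => hermite_integrable (α a) (x' a))
    exact h3.const_mul _

lemma double_int {d : ℕ} (k : ℕ) (x x' : Fin d → ℝ) :
    ∫ y : Fin d → ℝ, ∫ y' : Fin d → ℝ,
        (((∑ a, x a * x' a : ℝ) : ℂ) - ((∑ a, y a * y' a : ℝ) : ℂ)
          + Complex.I * (((∑ a, x a * y' a : ℝ) : ℂ) + ((∑ a, y a * x' a : ℝ) : ℂ))) ^ k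
        ∂(gmeas d) ∂(gmeas d)
      = ((∑ α ∈ Finset.piAntidiag Finset.univ k, (Nat.multinomial Finset.univ α : ℝ)
            * ((∏ a, He (α a) (x' a)) * ∏ a, He (α a) (x a)) : ℝ) : ℂ) := by
  have hexp : (fun y : Fin d → ℝ => ∫ y' : Fin d → ℝ,
        (((∑ a, x a * x' a : ℝ) : ℂ) - ((∑ a, y a * y' a : ℝ) : ℂ)
          + Complex.I * (((∑ a, x a * y' a : ℝ) : ℂ) + ((∑ a, y a * x' a : ℝ) : ℂ))) ^ k
        ∂(gmeas d))
      = fun y : Fin d → ℝ => ∑ α ∈ Finset.piAntidiag Finset.univ k,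
          ((Nat.multinomial Finset.univ α : ℂ) * ∏ a, ((x a : ℂ) + Complex.I * (y a)) ^ (α a))
            * ∏ a, ((He (α a) (x' a) : ℝ) : ℂ) := by
    funext y
    rw [show (fun y' : Fin d → ℝ =>
        (((∑ a, x a * x' a : ℝ) : ℂ) - ((∑ a, y a * y' a : ℝ) : ℂ)
          + Complex.I * (((∑ a, x a * y' a : ℝ) : ℂ) + ((∑ a, y a * x' a : ℝ) : ℂ))) ^ k)
      = fun y' : Fin d → ℝ =>
        (∑ a, ((x a : ℂ) + Complex.I * (y a)) * ((x' a : ℂ) + Complex.I * (y' a))) ^ k from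
      funext fun y' => by rw [expand_eq]]
    exact inner_int k x x' y
  rw [hexp, integral_finset_sum]
  · push_cast
    refine Finset.sum_congr rfl fun α _ => ?_
    rw [show (fun y : Fin d → ℝ =>
          ((Nat.multinomial Finset.univ α : ℂ) * ∏ a, ((x a : ℂ) + Complex.I * (y a)) ^ (α a))
            * ∏ a, ((He (α a) (x' a) : ℝ) : ℂ))
        = fun y : Fin d → ℝ =>
          ((Nat.multinomial Finset.univ α : ℂ) * ∏ a, ((He (α a) (x' a) : ℝ) : ℂ))
            * ∏ a, ((x a : ℂ) + Complex.I * (y a)) ^ (α a) from funext fun y => by ring]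
    rw [integral_const_mul]
    have h2 : ∫ y : Fin d → ℝ, ∏ a, ((x a : ℂ) + Complex.I * (y a)) ^ (α a) ∂(gmeas d)
        = ∏ a, ∫ z : ℝ, ((x a : ℂ) + Complex.I * z) ^ (α a) ∂(gaussianReal 0 1) :=
      gmeas_prod_integral (fun a z => ((x a : ℂ) + Complex.I * z) ^ (α a))
    rw [h2, Finset.prod_congr rfl fun a _ => hermite_gauss (α a) (x a)]
    push_cast
    ring
  · intro α _
    have h3 : Integrable (fun y : Fin d → ℝ =>
        ∏ a, ((x a : ℂ) + Complex.I * (y a)) ^ (α a)) (gmeas d) :=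
      gmeas_prod_integrable (fun a z => ((x a : ℂ) + Complex.I * z) ^ (α a))
        (fun a => hermite_integrable (α a) (x a))
    exact (h3.const_mul _).mul_const _

end

/-- Closed form of the degree-`k` Hermite kernel:
`∑_{|α|=k} H_α(x)H_α(x') = (1/k!) E[(xᵀx' − YᵀY' + i(xᵀY' + Yᵀx'))^k]`
with `Y, Y' ∼ N(0, I_d)` independent. -/
theorem hermite_kernel_closed_form (d k : ℕ) (x x' : Fin d → ℝ) :
    ∑' α : {α : Fin d → ℕ // ∑ a, α a = k}, Hmul α.1 x * Hmul α.1 x'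
      = (1 / (Nat.factorial k : ℝ)) *
        (∫ y : Fin d → ℝ, ∫ y' : Fin d → ℝ,
          (((∑ a, x a * x' a : ℝ) : ℂ) - ((∑ a, y a * y' a : ℝ) : ℂ)
            + Complex.I * (((∑ a, x a * y' a : ℝ) : ℂ) + ((∑ a, y a * x' a : ℝ) : ℂ))) ^ k
          ∂(gmeas d) ∂(gmeas d)).re := by
  rw [double_int, Complex.ofReal_re]
  have hfin : ∑' α : {α : Fin d → ℕ // ∑ a, α a = k}, Hmul α.1 x * Hmul α.1 x'
      = ∑ α ∈ Finset.piAntidiag Finset.univ k, Hmul α x * Hmul α x' := by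
    rw [← Finset.tsum_subtype (Finset.piAntidiag Finset.univ k)
      (fun α => Hmul α x * Hmul α x')]
    exact ((Equiv.subtypeEquivRight
      (p := fun α : Fin d → ℕ => ∑ a, α a = k)
      (q := fun α => α ∈ Finset.piAntidiag Finset.univ k)
      (fun α => by simp [Finset.mem_piAntidiag])).tsum_eq
      (fun β => Hmul β.1 x * Hmul β.1 x'))
  rw [hfin, Finset.mul_sum]
  refine Finset.sum_congr rfl fun α hα => ?_
  have hsum : ∑ a, α a = k := by
    have := (Finset.mem_piAntidiag.1 hα).1
    simpa using this
  rw [term_eq k x x' α hsum]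
  ring
end

section
/- For any positive semi-definite d×d real matrix A with eigenvalues λ_1,…,λ_d, the sum of square roots of the diagonal entries dominates the sum of square roots of the eigenvalues: ∑_{a=1}^d √(A_{aa}) ≥ ∑_{a=1}^d √(λ_a). -/
open Matrix

lemma psd_diag_nonneg {d : ℕ} {A : Matrix (Fin d) (Fin d) ℝ} (hA : A.PosSemidef) (a : Fin d) :
    0 ≤ A a a := by
  have := hA.dotProduct_mulVec_nonneg (Pi.single a 1)
  simpa [dotProduct, mulVec, Pi.single_apply, Finset.sum_ite_eq'] using this

/-- For a PSD matrix `A` with eigenvalues `λ_a`,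
`∑_a √(A_{aa}) ≥ ∑_a √(λ_a)`, i.e. `trace(Diag(A)^{1/2}) ≥ trace(A^{1/2})`. -/
theorem sum_sqrt_diag_ge_sum_sqrt_eigenvalues (d : ℕ)
    (A : Matrix (Fin d) (Fin d) ℝ) (hA : A.PosSemidef) :
    ∑ a, Real.sqrt (hA.1.eigenvalues a) ≤ ∑ a, Real.sqrt (A a a) := by
  set S : Matrix (Fin d) (Fin d) ℝ := (hA.1.eigenvectorUnitary : Matrix (Fin d) (Fin d) ℝ) * diagonal (fun i => Real.sqrt (hA.1.eigenvalues i)) * (star hA.1.eigenvectorUnitary : Matrix (Fin d) (Fin d) ℝ) with hS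
  have hSpsd : S.PosSemidef := (posSemidef_diagonal_iff.mpr (fun i => Real.sqrt_nonneg _)).mul_mul_conjTranspose_same _
  have htr : S.trace = ∑ a, Real.sqrt (hA.1.eigenvalues a) := by
    rw [hS, Matrix.trace_mul_cycle]
    have : (star hA.1.eigenvectorUnitary : Matrix (Fin d) (Fin d) ℝ) *
        hA.1.eigenvectorUnitary.1 = 1 := by
      exact_mod_cast (Unitary.star_mul_self_of_mem hA.1.eigenvectorUnitary.2)
    rw [this, Matrix.one_mul, Matrix.trace_diagonal]
  rw [← htr, Matrix.trace]
  apply Finset.sum_le_sum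
  intro a _
  have hdiag : S.diag a ≤ Real.sqrt (A a a) := by
    have hAa : A a a = ∑ b, (S a b) ^ 2 := by
      have : S * S = A := by
        have hU : (star hA.1.eigenvectorUnitary : Matrix (Fin d) (Fin d) ℝ) *
            hA.1.eigenvectorUnitary.1 = 1 := by
          exact_mod_cast (Unitary.star_mul_self_of_mem hA.1.eigenvectorUnitary.2)
        conv_rhs => rw [hA.1.spectral_theorem]
        rw [hS, Unitary.conjStarAlgAut_apply]
        simp only [Matrix.mul_assoc]
        rw [← Matrix.mul_assoc _ _ (diagonal _ * _), hU, Matrix.one_mul, ← Matrix.mul_assoc (diagonal _), diagonal_mul_diagonal]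
        congr 3
        ext i
        simp [Real.mul_self_sqrt (hA.eigenvalues_nonneg i)]
      calc A a a = (S * S) a a := by rw [this]
        _ = ∑ b, S a b * S b a := by rw [Matrix.mul_apply]
        _ = ∑ b, (S a b) ^ 2 := by
            apply Finset.sum_congr rfl
            intro b _
            have : S b a = S a b := by
              have h := hSpsd.1
              have := congrFun (congrFun h b) a
              simpa [Matrix.conjTranspose_apply] using this.symm
            rw [this, sq]
    have h1 : (S a a) ^ 2 ≤ A a a := by
      rw [hAa]
      exact Finset.single_le_sum (f := fun b => (S a b) ^ 2) (fun b _ => sq_nonneg _) (Finset.mem_univ a)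
    have h0 : 0 ≤ S a a := psd_diag_nonneg hSpsd a
    calc S.diag a = S a a := rfl
      _ = Real.sqrt ((S a a) ^ 2) := (Real.sqrt_sq h0).symm
      _ ≤ Real.sqrt (A a a) := Real.sqrt_le_sqrt h1
  exact hdiag
end
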